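/- arXiv:math/0112076 — 4 statements merged into one kernel-verified Lean document; each statement's English description precedes it below -/
import Mathlib

section
/- For coprime positive integers $a$ and $b$, the Dedekind sums satisfy the reciprocity law $s(a,b) + s(b,a) = -\frac{1}{4} + \frac{1}{12}\left(\frac{a}{b} + \frac{1}{ab} + \frac{b}{a}\right)$. -/
open Finset Classical in
/-- The sawtooth function `((x))`. -/
noncomputable def saw (x : ℝ) : ℝ :=
  if ∃ m : ℤ, (m : ℝ) = x then 0 else Int.fract x - 1/2

/-- The classical Dedekind sum `s(a,b)`. -/
noncomputable def dedekindSum (a b : ℕ) : ℝ :=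
  ∑ k ∈ Finset.range b, saw (k * a / b) * saw (k / b)

open Finset

lemma saw_zero : saw 0 = 0 := by
  simp [saw]

lemma saw_nat_div (n b : ℕ) (hb : 0 < b) (hnd : ¬ b ∣ n) :
    saw ((n : ℝ) / b) = ((n % b : ℕ) : ℝ) / b - 1/2 := by
  have hb0 : (b:ℝ) ≠ 0 := Nat.cast_ne_zero.mpr hb.ne'
  have hni : ¬ ∃ m : ℤ, (m : ℝ) = (n : ℝ) / b := by
    rintro ⟨m, hm⟩
    have : (m : ℝ) * b = n := by field_simp at hm; linarith [hm]
    have h2 : m * b = (n : ℤ) := by exact_mod_cast this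
    exact hnd (Int.ofNat_dvd.mp ⟨m, by rw [← h2]; ring⟩)
  rw [saw, if_neg hni]
  have hmod : (n : ℝ) / b = ((n % b : ℕ) : ℝ) / b + ((n / b : ℕ) : ℤ) := by
    have h := Nat.div_add_mod n b
    have h2 : ((b * (n / b) + n % b : ℕ) : ℝ) = (n : ℝ) := by rw [h]
    push_cast at h2
    rw [Int.cast_natCast]
    field_simp
    linarith
  rw [hmod, Int.fract_add_intCast, Int.fract_eq_self.2 ⟨by positivity, by
    rw [div_lt_one (by positivity)]
    exact_mod_cast Nat.mod_lt n hb⟩]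

lemma not_dvd_mul (a b k : ℕ) (hab : Nat.Coprime a b) (hk1 : 1 ≤ k) (hkb : k < b) :
    ¬ b ∣ k * a := by
  intro h
  have : b ∣ k := (Nat.Coprime.dvd_of_dvd_mul_right (Nat.Coprime.symm hab)) h
  have := Nat.le_of_dvd (by omega) this
  omega

lemma sum_mod_bij {M : Type*} [AddCommMonoid M] (a b : ℕ) (hab : Nat.Coprime a b)
    (f : ℕ → M) : ∑ k ∈ range b, f (k * a % b) = ∑ k ∈ range b, f k := by
  rcases Nat.lt_or_ge b 2 with hb2 | hb2
  · interval_cases b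
    · simp
    · simp
  · obtain ⟨c, -, hc⟩ := Nat.exists_mul_mod_eq_one_of_coprime hab (by omega)
    have hb : 0 < b := by omega
    refine Finset.sum_nbij' (fun k => k * a % b) (fun k => k * c % b)
      (fun k _ => mem_range.mpr (Nat.mod_lt _ hb))
      (fun k _ => mem_range.mpr (Nat.mod_lt _ hb)) (fun k hk => ?_) (fun k hk => ?_)
      (fun k _ => rfl)
    · have hkb := mem_range.mp hk
      show (k * a % b) * c % b = k
      rw [Nat.mod_mul_mod, mul_assoc, Nat.mul_mod, hc, mul_one, Nat.mod_mod_of_dvd _ dvd_rfl, Nat.mod_eq_of_lt hkb]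
    · have hkb := mem_range.mp hk
      show (k * c % b) * a % b = k
      rw [Nat.mod_mul_mod, mul_assoc, Nat.mul_mod, mul_comm c a, hc, mul_one, Nat.mod_mod_of_dvd _ dvd_rfl, Nat.mod_eq_of_lt hkb]

lemma sum_id_real (n : ℕ) : ∑ k ∈ range n, (k : ℝ) = n * (n - 1) / 2 := by
  induction n with
  | zero => simp
  | succ n ih => rw [Finset.sum_range_succ, ih]; push_cast; ring

lemma sum_sq_real (n : ℕ) : ∑ k ∈ range n, (k : ℝ)^2 = n * (n - 1) * (2*n - 1) / 6 := by
  induction n with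
  | zero => simp
  | succ n ih => rw [Finset.sum_range_succ, ih]; push_cast; ring

lemma Ico_sum_eq_range {M : Type*} [AddCommMonoid M] (b : ℕ) (hb : 0 < b) (f : ℕ → M)
    (hf : f 0 = 0) : ∑ k ∈ Ico 1 b, f k = ∑ k ∈ range b, f k := by
  rw [Finset.range_eq_Ico, Finset.sum_eq_sum_Ico_succ_bot hb, hf, zero_add]

lemma filter_row (a b k : ℕ) (hab : Nat.Coprime a b) (hk1 : 1 ≤ k) (hkb : k < b) :
    (Ico 1 a).filter (fun y => b * y < k * a) = Ico 1 (k * a / b + 1) := by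
  have hb : 0 < b := by omega
  have hnd : ¬ b ∣ k * a := not_dvd_mul a b k hab hk1 hkb
  ext y
  simp only [mem_filter, mem_Ico, Nat.lt_succ_iff]
  constructor
  · rintro ⟨⟨h1, h2⟩, h3⟩
    refine ⟨h1, ?_⟩
    rw [Nat.le_div_iff_mul_le hb, mul_comm]
    omega
  · rintro ⟨h1, h2⟩
    have hle : b * y ≤ k * a := by
      have := Nat.div_mul_le_self (k * a) b
      calc b * y ≤ b * (k * a / b) := Nat.mul_le_mul_left b h2
        _ ≤ k * a := by rw [mul_comm]; exact this
    have hne : b * y ≠ k * a := fun h => hnd ⟨y, h.symm⟩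
    have hya : y < a := by
      have ha : 0 < a := by
        rcases Nat.eq_zero_or_pos a with rfl | h
        · simp only [mul_zero, Nat.zero_div] at h2; omega
        · exact h
      have hq : k * a / b < a := by
        rw [Nat.div_lt_iff_lt_mul hb, mul_comm a b]
        exact (Nat.mul_lt_mul_right ha).mpr hkb
      omega
    exact ⟨⟨h1, hya⟩, by omega⟩

lemma lattice (a b : ℕ) (hab : Nat.Coprime a b) :
    2 * ∑ y ∈ Ico 1 a, y * (y * b / a) + ∑ k ∈ Ico 1 b, (k * a / b) * (k * a / b + 1)
      = 2 * a * ∑ k ∈ Ico 1 b, (k * a / b) := by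
  rcases Nat.eq_zero_or_pos a with rfl | ha
  · have : b = 1 := by simpa [Nat.Coprime] using hab
    subst this; simp
  rcases Nat.eq_zero_or_pos b with rfl | hb
  · have : a = 1 := by simpa [Nat.Coprime] using hab
    subst this; simp
  -- step 1: q(q+1) sums as double sum
  have h1 : ∑ k ∈ Ico 1 b, (k * a / b) * (k * a / b + 1)
      = ∑ k ∈ Ico 1 b, ∑ y ∈ Ico 1 a, (if b * y < k * a then 2 * y else 0) := by
    refine Finset.sum_congr rfl fun k hk => ?_
    rw [mem_Ico] at hk
    rw [← Finset.sum_filter, filter_row a b k hab hk.1 hk.2,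
      Ico_sum_eq_range _ (Nat.succ_pos _) _ rfl, ← Finset.mul_sum]
    have h := Finset.sum_range_id_mul_two (k * a / b + 1)
    rw [Nat.add_sub_cancel] at h
    set S := ∑ i ∈ range (k * a / b + 1), i
    set q := k * a / b
    have hc : q * (q+1) = (q+1) * q := mul_comm _ _
    omega
  -- step 2: RHS as double sum
  have h2 : 2 * a * ∑ k ∈ Ico 1 b, (k * a / b)
      = ∑ k ∈ Ico 1 b, ∑ y ∈ Ico 1 a, (if b * y < k * a then 2 * a else 0) := by
    rw [Finset.mul_sum]
    refine Finset.sum_congr rfl fun k hk => ?_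
    rw [mem_Ico] at hk
    rw [← Finset.sum_filter, filter_row a b k hab hk.1 hk.2, Finset.sum_const,
      Nat.card_Ico, smul_eq_mul, Nat.add_sub_cancel]
    ring
  -- step 3: T_a as double sum (columns)
  have h3 : 2 * ∑ y ∈ Ico 1 a, y * (y * b / a)
      = ∑ y ∈ Ico 1 a, ∑ k ∈ Ico 1 b, (if a * k < y * b then 2 * y else 0) := by
    rw [Finset.mul_sum]
    refine Finset.sum_congr rfl fun y hy => ?_
    rw [mem_Ico] at hy
    rw [← Finset.sum_filter, filter_row b a y hab.symm hy.1 hy.2, Finset.sum_const,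
      Nat.card_Ico, smul_eq_mul, Nat.add_sub_cancel]
    ring
  -- step 4: reflection
  have h4 : ∑ y ∈ Ico 1 a, ∑ k ∈ Ico 1 b, (if a * k < y * b then 2 * y else 0)
      = ∑ k ∈ Ico 1 b, ∑ y ∈ Ico 1 a, (if b * y < k * a then 2 * a - 2 * y else 0) := by
    rw [Finset.sum_comm]
    refine Finset.sum_nbij' (fun k => b - k) (fun k => b - k)
      (fun k hk => by simp only [mem_Ico] at *; omega) (fun k hk => by simp only [mem_Ico] at *; omega)
      (fun k hk => by simp only [mem_Ico] at hk ⊢; omega) (fun k hk => by simp only [mem_Ico] at hk ⊢; omega)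
      (fun k hk => ?_)
    rw [mem_Ico] at hk
    refine Finset.sum_nbij' (fun y => a - y) (fun y => a - y)
      (fun y hy => by simp only [mem_Ico] at *; omega) (fun y hy => by simp only [mem_Ico] at *; omega)
      (fun y hy => by simp only [mem_Ico] at hy ⊢; omega) (fun y hy => by simp only [mem_Ico] at hy ⊢; omega)
      (fun y hy => ?_)
    rw [mem_Ico] at hy
    have c1 : a * k = k * a := mul_comm a k
    have c2 : y * b = b * y := mul_comm y b
    have e1 : (b - k) * a = b * a - k * a := Nat.sub_mul b k a
    have e2 : b * (a - y) = b * a - b * y := Nat.mul_sub b a y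
    have hA : k * a < b * a := (Nat.mul_lt_mul_right ha).mpr hk.2
    have hB : b * y < b * a := (Nat.mul_lt_mul_left hb).mpr hy.2
    show (if a * k < y * b then 2 * y else 0)
        = (if b * (a - y) < (b - k) * a then 2 * a - 2 * (a - y) else 0)
    split_ifs with p q <;> omega
  rw [h1, h2, h3, h4, ← Finset.sum_add_distrib]
  refine Finset.sum_congr rfl fun k hk => ?_
  rw [← Finset.sum_add_distrib]
  refine Finset.sum_congr rfl fun y hy => ?_
  rw [mem_Ico] at hy
  split_ifs <;> omega

lemma cast_mod_eq (a b k : ℕ) : ((k * a % b : ℕ) : ℝ) = (k:ℝ) * a - b * ((k * a / b : ℕ) : ℝ) := by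
  have h := Nat.div_add_mod (k * a) b
  have h2 : ((b * (k * a / b) + k * a % b : ℕ) : ℝ) = ((k * a : ℕ) : ℝ) := by rw [h]
  push_cast at h2
  linarith

lemma ded_expand (a b : ℕ) (ha : 0 < a) (hb : 0 < b) (hab : Nat.Coprime a b) :
    dedekindSum a b =
      ((a:ℝ)/(b:ℝ)^2) * (∑ k ∈ Ico 1 b, (k:ℝ)^2)
      - (1/(b:ℝ)) * (∑ k ∈ Ico 1 b, (k:ℝ) * ((k * a / b : ℕ):ℝ))
      - (((a:ℝ)+1)/(2*(b:ℝ))) * (∑ k ∈ Ico 1 b, (k:ℝ))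
      + (1/2) * (∑ k ∈ Ico 1 b, ((k * a / b : ℕ):ℝ))
      + ((b:ℝ)-1)/4 := by
  have hb0 : (b:ℝ) ≠ 0 := Nat.cast_ne_zero.mpr hb.ne'
  have key : ∀ k ∈ Ico 1 b, saw ((k:ℝ) * (a:ℝ) / b) * saw ((k:ℝ) / b)
      = ((a:ℝ)/(b:ℝ)^2) * (k:ℝ)^2 - (1/(b:ℝ)) * ((k:ℝ) * ((k * a / b : ℕ):ℝ))
        - (((a:ℝ)+1)/(2*(b:ℝ))) * (k:ℝ) + (1/2) * ((k * a / b : ℕ):ℝ) + 1/4 := by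
    intro k hk
    rw [mem_Ico] at hk
    have hnd : ¬ b ∣ k * a := not_dvd_mul a b k hab hk.1 hk.2
    have hndk : ¬ b ∣ k := fun h => by have := Nat.le_of_dvd (by omega) h; omega
    have s1 : saw ((k:ℝ) * (a:ℝ) / b) = ((k * a % b : ℕ):ℝ)/b - 1/2 := by
      have h := saw_nat_div (k * a) b hb hnd
      push_cast at h ⊢
      exact h
    have s2 : saw ((k:ℝ) / b) = (k:ℝ)/b - 1/2 := by
      have h := saw_nat_div k b hb hndk
      rw [Nat.mod_eq_of_lt hk.2] at h
      exact h
    rw [s1, s2, cast_mod_eq a b k]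
    field_simp
    ring
  unfold dedekindSum
  rw [Finset.range_eq_Ico, Finset.sum_eq_sum_Ico_succ_bot hb]
  have h0 : saw ((0:ℕ) * (a:ℝ) / b) * saw ((0:ℕ) / (b:ℝ)) = 0 := by
    norm_num [saw_zero]
  push_cast
  push_cast at h0
  rw [h0, zero_add, Finset.sum_congr rfl key, Finset.sum_add_distrib, Finset.sum_add_distrib,
    Finset.sum_sub_distrib, Finset.sum_sub_distrib, ← Finset.mul_sum, ← Finset.mul_sum,
    ← Finset.mul_sum, ← Finset.mul_sum, Finset.sum_const, Nat.card_Ico, nsmul_eq_mul]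
  rw [Nat.cast_sub hb]
  push_cast
  ring

lemma sum_mod_Ico (a b : ℕ) (hb : 0 < b) (hab : Nat.Coprime a b) (f : ℕ → ℝ) (hf : f 0 = 0) :
    ∑ k ∈ Ico 1 b, f (k * a % b) = ∑ k ∈ Ico 1 b, f k := by
  rw [Ico_sum_eq_range b hb (fun k => f (k * a % b)) (by simp [hf]),
    Ico_sum_eq_range b hb f hf]
  exact sum_mod_bij a b hab f

lemma sum_q_rel (a b : ℕ) (hb : 0 < b) (hab : Nat.Coprime a b) :
    (a:ℝ) * (∑ k ∈ Ico 1 b, (k:ℝ)) - b * (∑ k ∈ Ico 1 b, ((k * a / b : ℕ):ℝ))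
      = ∑ k ∈ Ico 1 b, (k:ℝ) := by
  have hbij : ∑ k ∈ Ico 1 b, ((k * a % b : ℕ):ℝ) = ∑ k ∈ Ico 1 b, (k:ℝ) :=
    sum_mod_Ico a b hb hab (fun n => (n:ℝ)) (by simp)
  have hsplit : ∑ k ∈ Ico 1 b, ((k * a % b : ℕ):ℝ)
      = (a:ℝ) * (∑ k ∈ Ico 1 b, (k:ℝ)) - b * (∑ k ∈ Ico 1 b, ((k * a / b : ℕ):ℝ)) := by
    rw [Finset.mul_sum, Finset.mul_sum, ← Finset.sum_sub_distrib]
    exact Finset.sum_congr rfl fun k _ => by rw [cast_mod_eq a b k]; ring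
  linarith

lemma sum_q2_rel (a b : ℕ) (hb : 0 < b) (hab : Nat.Coprime a b) :
    (a:ℝ)^2 * (∑ k ∈ Ico 1 b, (k:ℝ)^2)
      - 2*(a:ℝ)*(b:ℝ) * (∑ k ∈ Ico 1 b, (k:ℝ) * ((k * a / b : ℕ):ℝ))
      + (b:ℝ)^2 * (∑ k ∈ Ico 1 b, ((k * a / b : ℕ):ℝ)^2)
      = ∑ k ∈ Ico 1 b, (k:ℝ)^2 := by
  have hbij : ∑ k ∈ Ico 1 b, ((k * a % b : ℕ):ℝ)^2 = ∑ k ∈ Ico 1 b, (k:ℝ)^2 :=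
    sum_mod_Ico a b hb hab (fun n => (n:ℝ)^2) (by simp)
  have hsplit : ∑ k ∈ Ico 1 b, ((k * a % b : ℕ):ℝ)^2
      = (a:ℝ)^2 * (∑ k ∈ Ico 1 b, (k:ℝ)^2)
        - 2*(a:ℝ)*(b:ℝ) * (∑ k ∈ Ico 1 b, (k:ℝ) * ((k * a / b : ℕ):ℝ))
        + (b:ℝ)^2 * (∑ k ∈ Ico 1 b, ((k * a / b : ℕ):ℝ)^2) := by
    rw [Finset.mul_sum, Finset.mul_sum, Finset.mul_sum, ← Finset.sum_sub_distrib,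
      ← Finset.sum_add_distrib]
    exact Finset.sum_congr rfl fun k _ => by rw [cast_mod_eq a b k]; ring
  linarith

lemma lattice_real (a b : ℕ) (hab : Nat.Coprime a b) :
    2 * (∑ y ∈ Ico 1 a, (y:ℝ) * ((y * b / a : ℕ):ℝ))
      + ((∑ k ∈ Ico 1 b, ((k * a / b : ℕ):ℝ)^2) + (∑ k ∈ Ico 1 b, ((k * a / b : ℕ):ℝ)))
      = 2 * (a:ℝ) * (∑ k ∈ Ico 1 b, ((k * a / b : ℕ):ℝ)) := by
  have h := lattice a b hab
  have hc : ((2 * ∑ y ∈ Ico 1 a, y * (y * b / a)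
      + ∑ k ∈ Ico 1 b, (k * a / b) * (k * a / b + 1) : ℕ) : ℝ)
      = ((2 * a * ∑ k ∈ Ico 1 b, (k * a / b) : ℕ) : ℝ) := by rw [h]
  push_cast at hc
  have e1 : ∑ k ∈ Ico 1 b, ((k * a / b : ℕ):ℝ) * (((k * a / b : ℕ):ℝ) + 1)
      = (∑ k ∈ Ico 1 b, ((k * a / b : ℕ):ℝ)^2) + (∑ k ∈ Ico 1 b, ((k * a / b : ℕ):ℝ)) := by
    rw [← Finset.sum_add_distrib]
    exact Finset.sum_congr rfl fun k _ => by ring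
  rw [e1] at hc
  linarith

lemma sum_id_Ico (n : ℕ) (hn : 0 < n) : ∑ k ∈ Ico 1 n, (k:ℝ) = n * (n - 1) / 2 := by
  rw [Ico_sum_eq_range n hn _ (by simp), sum_id_real]

lemma sum_sq_Ico (n : ℕ) (hn : 0 < n) :
    ∑ k ∈ Ico 1 n, (k:ℝ)^2 = n * (n - 1) * (2*n - 1) / 6 := by
  rw [Ico_sum_eq_range n hn _ (by simp), sum_sq_real]

theorem dedekind_reciprocity (a b : ℕ) (ha : 0 < a) (hb : 0 < b)
    (hab : Nat.Coprime a b) :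
    dedekindSum a b + dedekindSum b a =
      -1/4 + 1/12 * ((a : ℝ)/b + 1/(a*b) + (b : ℝ)/a) := by
  have haR : (a:ℝ) ≠ 0 := Nat.cast_ne_zero.mpr ha.ne'
  have hbR : (b:ℝ) ≠ 0 := Nat.cast_ne_zero.mpr hb.ne'
  have E1 := ded_expand a b ha hb hab
  have E2 := ded_expand b a hb ha hab.symm
  have R1 := sum_q_rel a b hb hab
  have R1' := sum_q_rel b a ha hab.symm
  have R2 := sum_q2_rel a b hb hab
  have L := lattice_real a b hab
  rw [sum_id_Ico b hb] at E1 R1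
  rw [sum_sq_Ico b hb] at E1 R2
  rw [sum_id_Ico a ha] at E2 R1'
  rw [sum_sq_Ico a ha] at E2
  set t := ∑ k ∈ Ico 1 b, (k:ℝ) * ((k * a / b : ℕ):ℝ) with ht
  set q := ∑ k ∈ Ico 1 b, ((k * a / b : ℕ):ℝ) with hqd
  set u := ∑ k ∈ Ico 1 b, ((k * a / b : ℕ):ℝ)^2 with hud
  set p := ∑ k ∈ Ico 1 a, (k:ℝ) * ((k * b / a : ℕ):ℝ) with hpd
  set s := ∑ k ∈ Ico 1 a, ((k * b / a : ℕ):ℝ) with hsd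
  have hq : q = ((a:ℝ)*((b:ℝ)*((b:ℝ)-1)/2) - (b:ℝ)*((b:ℝ)-1)/2)/(b:ℝ) := by
    rw [eq_div_iff hbR]; linear_combination -R1
  have hs : s = ((b:ℝ)*((a:ℝ)*((a:ℝ)-1)/2) - (a:ℝ)*((a:ℝ)-1)/2)/(a:ℝ) := by
    rw [eq_div_iff haR]; linear_combination -R1'
  have hu : u = ((b:ℝ)*((b:ℝ)-1)*(2*(b:ℝ)-1)/6 - (a:ℝ)^2*((b:ℝ)*((b:ℝ)-1)*(2*(b:ℝ)-1)/6)
      + 2*(a:ℝ)*(b:ℝ)*t)/(b:ℝ)^2 := by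
    rw [eq_div_iff (pow_ne_zero 2 hbR)]; linear_combination R2
  have hp : p = (2*(a:ℝ)*q - u - q)/2 := by linear_combination L/2
  rw [E1, E2, hp, hu, hq, hs]
  field_simp
  ring
end

section
/- Let $p$ and $q$ be coprime positive integers and suppose $1 \le n \le p+q$. Then $\frac{1}{p}\sum_{\lambda^p=1, \lambda \neq 1} \frac{\lambda^n}{(1-\lambda^q)(1-\lambda)} + \frac{1}{q}\sum_{\lambda^q=1, \lambda \neq 1} \frac{\lambda^n}{(1-\lambda^p)(1-\lambda)} = -\frac{n^2}{2pq} + \frac{n}{2}\left(\frac{1}{p}+\frac{1}{q}+\frac{1}{pq}\right) - \frac{1}{4}\left(\frac{1}{p}+\frac{1}{q}+1\right) - \frac{1}{12}\left(\frac{p}{q}+\frac{1}{pq}+\frac{q}{p}\right)$ (Gessel's reciprocity law). -/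
open Finset Polynomial

private lemma gauss_sum_c (m : ℕ) : (∑ i ∈ Finset.range m, (i:ℂ)) * 2 = (m:ℂ) * ((m:ℂ) - 1) := by
  induction m with
  | zero => simp
  | succ k ih => rw [Finset.sum_range_succ, add_mul, ih]; push_cast; ring

private lemma sq_sum_c (m : ℕ) :
    (∑ i ∈ Finset.range m, (i:ℂ) * ((i - 1 : ℕ):ℂ)) * 3 = (m:ℂ) * ((m:ℂ) - 1) * ((m:ℂ) - 2) := by
  induction m with
  | zero => simp
  | succ k ih =>
    rw [Finset.sum_range_succ, add_mul, ih]
    rcases Nat.eq_zero_or_pos k with rfl | hk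
    · norm_num
    · have h : ((k - 1 : ℕ):ℂ) = (k:ℂ) - 1 := by
        push_cast [Nat.cast_sub hk]; ring
      rw [h]; push_cast; ring

private lemma cube_dvd_of_derivs {F : ℂ[X]} (h0 : F.eval 1 = 0) (h1 : F.derivative.eval 1 = 0)
    (h2 : F.derivative.derivative.eval 1 = 0) : ((X : ℂ[X]) - C 1) ^ 3 ∣ F := by
  obtain ⟨G, hG⟩ := dvd_iff_isRoot.mpr h0
  have hG1 : G.eval 1 = 0 := by
    rw [hG, derivative_mul] at h1
    simpa using h1
  obtain ⟨H, hH⟩ := dvd_iff_isRoot.mpr hG1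
  have hF2 : F = ((X : ℂ[X]) - C 1) ^ 2 * H := by rw [hG, hH]; ring
  have hH1 : H.eval 1 = 0 := by
    rw [hF2] at h2
    simp [derivative_mul, derivative_pow, eval_mul, eval_add] at h2
    simpa using h2
  obtain ⟨K, hK⟩ := dvd_iff_isRoot.mpr hH1
  exact ⟨K, by rw [hF2, hK]; ring⟩

private lemma sum_eval_div_prod (s : Finset ℂ) (P : ℂ[X]) (h : P.degree < s.card) :
    ∑ r ∈ s, P.eval r * (∏ r' ∈ s.erase r, (r - r'))⁻¹ = P.coeff (s.card - 1) := by
  classical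
  have hinj : Set.InjOn id (s : Set ℂ) := Set.injOn_id _
  have hint := Lagrange.eq_interpolate (v := id) (s := s) hinj (by simpa using h)
  conv_rhs => rw [hint]
  rw [Lagrange.interpolate_apply, Polynomial.finset_sum_coeff]
  refine Finset.sum_congr rfl fun r hr => ?_
  rw [coeff_C_mul]
  have hb : Lagrange.basis s id r
      = C ((∏ r' ∈ s.erase r, (r - r'))⁻¹) * ∏ r' ∈ s.erase r, ((X : ℂ[X]) - C r') := by
    unfold Lagrange.basis Lagrange.basisDivisor
    rw [Finset.prod_mul_distrib, ← Finset.prod_inv_distrib, map_prod]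
    simp
  have hm : (∏ r' ∈ s.erase r, ((X : ℂ[X]) - C r')).Monic :=
    monic_prod_of_monic _ _ fun _ _ => monic_X_sub_C _
  have hd : (∏ r' ∈ s.erase r, ((X : ℂ[X]) - C r')).natDegree = s.card - 1 := by
    rw [natDegree_prod _ _ fun i _ => X_sub_C_ne_zero i]
    simp [Finset.card_erase_of_mem hr]
  rw [hb, coeff_C_mul, ← hd, hm.coeff_natDegree, mul_one]
  simp

private lemma F_cube_dvd (u v : ℂ[X]) (n : ℕ) (a b c u0 u1 u2 v0 v1 v2 : ℂ)
    (hu0 : u.eval 1 = u0) (hu1 : (derivative u).eval 1 = u1)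
    (hu2 : (derivative (derivative u)).eval 1 = u2)
    (hv0 : v.eval 1 = v0) (hv1 : (derivative v).eval 1 = v1)
    (hv2 : (derivative (derivative v)).eval 1 = v2)
    (e0 : 1 - a * (u0 * v0) = 0)
    (e1 : ((n-1:ℕ):ℂ) - (b * (u0 * v0) + a * (u1 * v0 + u0 * v1)) = 0)
    (e2 : ((n-1:ℕ):ℂ) * ((n-1-1:ℕ):ℂ)
        - (2 * c * (u0 * v0) + 2 * b * (u1 * v0 + u0 * v1)
          + a * (u2 * v0 + 2 * u1 * v1 + u0 * v2)) = 0) :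
    ((X : ℂ[X]) - C 1) ^ 3 ∣
      X ^ (n-1) - (C a + C b * (X - C 1) + C c * (X - C 1) ^ 2) * (u * v) := by
  apply cube_dvd_of_derivs
  · simp only [eval_sub, eval_mul, eval_add, eval_pow, eval_C, eval_X, eval_one,
      hu0, hv0, one_pow, sub_self]
    linear_combination e0
  · simp only [derivative_sub, derivative_mul, derivative_add, derivative_pow, derivative_C,
      derivative_X, derivative_one, derivative_X_pow, eval_sub, eval_mul, eval_add, eval_pow,
      eval_C, eval_X, eval_one, eval_natCast, eval_zero, derivative_zero, hu0, hu1, hv0, hv1,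
      one_pow, sub_self]
    linear_combination e1
  · simp only [derivative_sub, derivative_mul, derivative_add, derivative_pow, derivative_C,
      derivative_X, derivative_one, derivative_X_pow, derivative_natCast, eval_sub, eval_mul,
      eval_add, eval_pow, eval_C, eval_X, eval_one, eval_natCast,
      eval_zero, derivative_zero, hu0, hu1, hu2, hv0, hv1, hv2, one_pow, sub_self]
    linear_combination e2

private lemma term_value (lam Pv gv vv : ℂ) (n p q : ℕ) (hp : 0 < p) (hn : 1 ≤ n)
    (hp0 : (p:ℂ) ≠ 0) (hlam0 : lam ≠ 0) (hlam1 : lam ≠ 1) (hlamp : lam ^ p = 1)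
    (hq1 : lam ^ q ≠ 1)
    (hg : (lam - 1) * gv = (p:ℂ) * lam ^ (p-1))
    (hv : (lam - 1) * vv = lam ^ q - 1)
    (hP : Pv * (lam - 1) ^ 3 = lam ^ (n-1)) :
    Pv * (gv * vv)⁻¹ = 1/(p:ℂ) * (lam ^ n / ((1 - lam ^ q) * (1 - lam))) := by
  have hl1 : lam - 1 ≠ 0 := sub_ne_zero.mpr hlam1
  have hq1' : lam ^ q - 1 ≠ 0 := sub_ne_zero.mpr hq1
  have hpp : lam ^ (p-1) = 1 / lam := by
    rw [eq_div_iff hlam0, ← pow_succ, Nat.sub_add_cancel hp, hlamp]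
  have hnn : lam ^ (n-1) = lam ^ n / lam := by
    rw [eq_div_iff hlam0, ← pow_succ, Nat.sub_add_cancel hn]
  have hgv : gv ≠ 0 := by
    intro h
    rw [h, mul_zero] at hg
    exact (mul_ne_zero hp0 (pow_ne_zero _ hlam0)) hg.symm
  have hvv : vv ≠ 0 := by
    intro h
    rw [h, mul_zero] at hv
    exact hq1' hv.symm
  have hGv : gv = (p:ℂ) * (1/lam) / (lam - 1) := by
    rw [eq_div_iff hl1, ← hpp]
    linear_combination hg
  have hVv : vv = (lam ^ q - 1) / (lam - 1) := by
    rw [eq_div_iff hl1]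
    linear_combination hv
  have hPv : Pv = lam ^ n / lam / (lam - 1) ^ 3 := by
    rw [eq_div_iff (pow_ne_zero 3 hl1), ← hnn]
    exact hP
  have h1q : (1:ℂ) - lam ^ q ≠ 0 := fun h => hq1' (by linear_combination -h)
  have h1l : (1:ℂ) - lam ≠ 0 := fun h => hl1 (by linear_combination -h)
  rw [hPv, hGv, hVv]
  field_simp
  ring

set_option maxHeartbeats 2000000 in
theorem gessel_reciprocity (p q n : ℕ) (hp : 0 < p) (hq : 0 < q)
    (hpq : Nat.Coprime p q) (hn : 1 ≤ n) (hn' : n ≤ p + q) :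
    (1 / p : ℂ) * ∑ z ∈ (nthRootsFinset p (1 : ℂ)).erase 1,
        z ^ n / ((1 - z ^ q) * (1 - z)) +
      (1 / q : ℂ) * ∑ z ∈ (nthRootsFinset q (1 : ℂ)).erase 1,
        z ^ n / ((1 - z ^ p) * (1 - z)) =
      -(n ^ 2 : ℂ) / (2 * p * q) + (n / 2 : ℂ) * (1 / p + 1 / q + 1 / (p * q)) -
        (1 / 4 : ℂ) * (1 / p + 1 / q + 1) -
        (1 / 12 : ℂ) * ((p : ℂ) / q + 1 / (p * q) + (q : ℂ) / p) := by
  classical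
  by_cases hone : p = 1 ∧ q = 1
  · obtain ⟨hp1, hq1⟩ := hone
    subst hp1; subst hq1
    have he : (nthRootsFinset 1 (1 : ℂ)).erase 1 = ∅ := by
      ext x
      simp [Polynomial.mem_nthRootsFinset Nat.one_pos]
    interval_cases n <;> (rw [he]; norm_num)
  have hpq3 : 3 ≤ p + q := by
    by_contra h
    push_neg at h
    exact hone ⟨by omega, by omega⟩
  have hP0 : (p:ℂ) ≠ 0 := Nat.cast_ne_zero.mpr hp.ne'
  have hQ0 : (q:ℂ) ≠ 0 := Nat.cast_ne_zero.mpr hq.ne'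
  have key : ∀ z : ℂ, z ^ p = 1 → z ^ q = 1 → z = 1 := by
    intro z h1 h2
    have hg : Nat.gcd p q = 1 := hpq
    have d := Nat.dvd_gcd (orderOf_dvd_of_pow_eq_one h1) (orderOf_dvd_of_pow_eq_one h2)
    rw [hg, Nat.dvd_one] at d
    exact orderOf_eq_one_iff.mp d
  set Sp := (nthRootsFinset p (1 : ℂ)).erase 1 with hSpdef
  set Sq := (nthRootsFinset q (1 : ℂ)).erase 1 with hSqdef
  have hmemSp : ∀ z ∈ Sp, z ^ p = 1 ∧ z ≠ 1 ∧ z ≠ 0 ∧ z ^ q ≠ 1 := by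
    intro z hz
    rw [hSpdef] at hz
    have h1 : z ≠ 1 := Finset.ne_of_mem_erase hz
    have h2 : z ∈ nthRootsFinset p (1 : ℂ) := Finset.mem_of_mem_erase hz
    have h3 : z ^ p = 1 := (Polynomial.mem_nthRootsFinset hp 1).mp h2
    exact ⟨h3, h1, ne_zero_of_mem_nthRootsFinset one_ne_zero h2, fun hzq => h1 (key z h3 hzq)⟩
  have hmemSq : ∀ z ∈ Sq, z ^ q = 1 ∧ z ≠ 1 ∧ z ≠ 0 ∧ z ^ p ≠ 1 := by
    intro z hz
    rw [hSqdef] at hz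
    have h1 : z ≠ 1 := Finset.ne_of_mem_erase hz
    have h2 : z ∈ nthRootsFinset q (1 : ℂ) := Finset.mem_of_mem_erase hz
    have h3 : z ^ q = 1 := (Polynomial.mem_nthRootsFinset hq 1).mp h2
    exact ⟨h3, h1, ne_zero_of_mem_nthRootsFinset one_ne_zero h2, fun hzp => h1 (key z hzp h3)⟩
  have hdisj : Disjoint Sp Sq := by
    rw [Finset.disjoint_left]
    intro z hzp hzq
    exact (hmemSp z hzp).2.1 (key z (hmemSp z hzp).1 (hmemSq z hzq).1)
  have hcardp : Sp.card = p - 1 := by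
    rw [hSpdef, Finset.card_erase_of_mem (Polynomial.one_mem_nthRootsFinset hp),
      (Complex.isPrimitiveRoot_exp p hp.ne').card_nthRootsFinset]
  have hcardq : Sq.card = q - 1 := by
    rw [hSqdef, Finset.card_erase_of_mem (Polynomial.one_mem_nthRootsFinset hq),
      (Complex.isPrimitiveRoot_exp q hq.ne').card_nthRootsFinset]
  set u : ℂ[X] := ∑ i ∈ Finset.range p, X ^ i with hudef
  set v : ℂ[X] := ∑ i ∈ Finset.range q, X ^ i with hvdef
  have hu_mul : u * (X - C 1) = X ^ p - 1 := by
    rw [hudef]; simpa using geom_sum_mul (X:ℂ[X]) p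
  have hv_mul : v * (X - C 1) = X ^ q - 1 := by
    rw [hvdef]; simpa using geom_sum_mul (X:ℂ[X]) q
  have hu_prod : u = ∏ μ ∈ Sp, (X - C μ) := by
    apply mul_right_cancel₀ (X_sub_C_ne_zero (1:ℂ))
    rw [hu_mul, X_pow_sub_one_eq_prod hp (Complex.isPrimitiveRoot_exp p hp.ne'),
      ← Finset.mul_prod_erase _ _ (Polynomial.one_mem_nthRootsFinset hp), mul_comm, ← hSpdef]
  have hv_prod : v = ∏ μ ∈ Sq, (X - C μ) := by
    apply mul_right_cancel₀ (X_sub_C_ne_zero (1:ℂ))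
    rw [hv_mul, X_pow_sub_one_eq_prod hq (Complex.isPrimitiveRoot_exp q hq.ne'),
      ← Finset.mul_prod_erase _ _ (Polynomial.one_mem_nthRootsFinset hq), mul_comm, ← hSqdef]
  have hu_monic : u.Monic := by
    rw [hu_prod]; exact monic_prod_of_monic _ _ fun _ _ => monic_X_sub_C _
  have hv_monic : v.Monic := by
    rw [hv_prod]; exact monic_prod_of_monic _ _ fun _ _ => monic_X_sub_C _
  have hu_deg : u.natDegree = p - 1 := by
    rw [hu_prod, natDegree_prod _ _ fun i _ => X_sub_C_ne_zero i]
    simp only [natDegree_X_sub_C]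
    rw [Finset.sum_const, smul_eq_mul, mul_one, hcardp]
  have hv_deg : v.natDegree = q - 1 := by
    rw [hv_prod, natDegree_prod _ _ fun i _ => X_sub_C_ne_zero i]
    simp only [natDegree_X_sub_C]
    rw [Finset.sum_const, smul_eq_mul, mul_one, hcardq]
  -- eval facts at 1
  have hu0 : u.eval 1 = (p:ℂ) := by rw [hudef]; simp [eval_finset_sum]
  have hv0 : v.eval 1 = (q:ℂ) := by rw [hvdef]; simp [eval_finset_sum]
  have hu1 : (derivative u).eval 1 = (p:ℂ) * ((p:ℂ) - 1) / 2 := by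
    have h : (derivative u).eval 1 = ∑ i ∈ Finset.range p, (i:ℂ) := by
      rw [hudef, map_sum]; simp [derivative_X_pow, eval_finset_sum]
    rw [h, eq_div_iff (two_ne_zero (α := ℂ))]
    exact gauss_sum_c p
  have hv1 : (derivative v).eval 1 = (q:ℂ) * ((q:ℂ) - 1) / 2 := by
    have h : (derivative v).eval 1 = ∑ i ∈ Finset.range q, (i:ℂ) := by
      rw [hvdef, map_sum]; simp [derivative_X_pow, eval_finset_sum]
    rw [h, eq_div_iff (two_ne_zero (α := ℂ))]
    exact gauss_sum_c q
  have hu2 : (derivative (derivative u)).eval 1 = (p:ℂ) * ((p:ℂ) - 1) * ((p:ℂ) - 2) / 3 := by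
    have h : (derivative (derivative u)).eval 1 = ∑ i ∈ Finset.range p, (i:ℂ) * ((i-1:ℕ):ℂ) := by
      rw [hudef, map_sum, map_sum]; simp [derivative_X_pow, eval_finset_sum]
    rw [h, eq_div_iff (three_ne_zero (α := ℂ))]
    exact sq_sum_c p
  have hv2 : (derivative (derivative v)).eval 1 = (q:ℂ) * ((q:ℂ) - 1) * ((q:ℂ) - 2) / 3 := by
    have h : (derivative (derivative v)).eval 1 = ∑ i ∈ Finset.range q, (i:ℂ) * ((i-1:ℕ):ℂ) := by
      rw [hvdef, map_sum, map_sum]; simp [derivative_X_pow, eval_finset_sum]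
    rw [h, eq_div_iff (three_ne_zero (α := ℂ))]
    exact sq_sum_c q
  -- scalar constants
  obtain ⟨A, hAdef⟩ : ∃ x : ℂ, x = 1 / ((p:ℂ) * q) := ⟨_, rfl⟩
  obtain ⟨B, hBdef⟩ : ∃ x : ℂ, x = (((n-1:ℕ):ℂ)
      - A * ((p:ℂ)*((p:ℂ)-1)/2 * q + (p:ℂ) * ((q:ℂ)*((q:ℂ)-1)/2))) / ((p:ℂ) * q) := ⟨_, rfl⟩
  obtain ⟨Cc, hCcdef⟩ : ∃ x : ℂ, x = (((n-1:ℕ):ℂ) * ((n-1-1:ℕ):ℂ)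
      - A * ((p:ℂ)*((p:ℂ)-1)*((p:ℂ)-2)/3 * q + 2*((p:ℂ)*((p:ℂ)-1)/2)*((q:ℂ)*((q:ℂ)-1)/2)
        + (p:ℂ) * ((q:ℂ)*((q:ℂ)-1)*((q:ℂ)-2)/3))
      - 2 * B * ((p:ℂ)*((p:ℂ)-1)/2 * q + (p:ℂ) * ((q:ℂ)*((q:ℂ)-1)/2))) / (2 * ((p:ℂ) * q))
    := ⟨_, rfl⟩
  have e0 : 1 - A * ((p:ℂ) * (q:ℂ)) = 0 := by
    rw [hAdef]; field_simp; ring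
  have e1 : ((n-1:ℕ):ℂ) - (B * ((p:ℂ) * q)
      + A * ((p:ℂ)*((p:ℂ)-1)/2 * q + (p:ℂ) * ((q:ℂ)*((q:ℂ)-1)/2))) = 0 := by
    rw [hBdef]; field_simp; ring
  have e2 : ((n-1:ℕ):ℂ) * ((n-1-1:ℕ):ℂ)
      - (2 * Cc * ((p:ℂ) * q) + 2 * B * ((p:ℂ)*((p:ℂ)-1)/2 * q + (p:ℂ) * ((q:ℂ)*((q:ℂ)-1)/2))
        + A * ((p:ℂ)*((p:ℂ)-1)*((p:ℂ)-2)/3 * q + 2 * ((p:ℂ)*((p:ℂ)-1)/2) * ((q:ℂ)*((q:ℂ)-1)/2)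
          + (p:ℂ) * ((q:ℂ)*((q:ℂ)-1)*((q:ℂ)-2)/3))) = 0 := by
    have h2pq : (2 * ((p:ℂ) * q) : ℂ) ≠ 0 := by
      simp [hP0, hQ0]
    have hh : Cc * (2 * ((p:ℂ) * q))
        = ((n-1:ℕ):ℂ) * ((n-1-1:ℕ):ℂ)
          - A * ((p:ℂ)*((p:ℂ)-1)*((p:ℂ)-2)/3 * q + 2*((p:ℂ)*((p:ℂ)-1)/2)*((q:ℂ)*((q:ℂ)-1)/2)
            + (p:ℂ) * ((q:ℂ)*((q:ℂ)-1)*((q:ℂ)-2)/3))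
          - 2 * B * ((p:ℂ)*((p:ℂ)-1)/2 * q + (p:ℂ) * ((q:ℂ)*((q:ℂ)-1)/2)) := by
      rw [hCcdef]
      exact div_mul_cancel₀ _ h2pq
    linear_combination -hh
  obtain ⟨P2, hP2⟩ := F_cube_dvd u v n A B Cc (p:ℂ) ((p:ℂ)*((p:ℂ)-1)/2)
    ((p:ℂ)*((p:ℂ)-1)*((p:ℂ)-2)/3) (q:ℂ) ((q:ℂ)*((q:ℂ)-1)/2) ((q:ℂ)*((q:ℂ)-1)*((q:ℂ)-2)/3)
    hu0 hu1 hu2 hv0 hv1 hv2 e0 e1 e2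
  -- degree bounds
  have hRdeg : (C A + C B * (X - C 1) + C Cc * ((X:ℂ[X]) - C 1) ^ 2).natDegree ≤ 2 := by
    compute_degree
  have hFdeg : ((X:ℂ[X]) ^ (n-1)
      - (C A + C B * (X - C 1) + C Cc * (X - C 1) ^ 2) * (u * v)).natDegree ≤ p + q := by
    refine (natDegree_sub_le _ _).trans (max_le ?_ ?_)
    · rw [natDegree_X_pow]; omega
    · calc ((C A + C B * (X - C 1) + C Cc * ((X:ℂ[X]) - C 1) ^ 2) * (u * v)).natDegree
          ≤ _ + _ := natDegree_mul_le
        _ ≤ 2 + (u.natDegree + v.natDegree) := add_le_add hRdeg natDegree_mul_le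
        _ ≤ p + q := by rw [hu_deg, hv_deg]; omega
  have hP2deg : P2.natDegree ≤ p + q - 3 := by
    rcases eq_or_ne P2 0 with h | h
    · simp [h]
    · have h3 : (((X:ℂ[X]) - C 1) ^ 3).natDegree = 3 := by
        rw [natDegree_pow, natDegree_X_sub_C]
      have hh := natDegree_mul (pow_ne_zero 3 (X_sub_C_ne_zero (1:ℂ))) h
      rw [← hP2, h3] at hh
      omega
  have huv_deg : (u * v).natDegree = p + q - 2 := by
    rw [natDegree_mul hu_monic.ne_zero hv_monic.ne_zero, hu_deg, hv_deg]
    omega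
  -- coefficient computation
  have hc1 : ((X:ℂ[X]) ^ (n-1)
      - (C A + C B * (X - C 1) + C Cc * (X - C 1) ^ 2) * (u * v)).coeff (p+q) = -Cc := by
    rw [coeff_sub]
    have hx : ((X:ℂ[X]) ^ (n-1)).coeff (p+q) = 0 := by
      rw [coeff_X_pow, if_neg (by omega)]
    have hexp : (C A + C B * (X - C 1) + C Cc * ((X:ℂ[X]) - C 1) ^ 2) * (u * v)
        = C A * (u * v) + C B * ((X - C 1) * (u * v)) + C Cc * ((X - C 1) ^ 2 * (u * v)) := by
      ring
    have h0 : (u * v).coeff (p+q) = 0 :=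
      coeff_eq_zero_of_natDegree_lt (by rw [huv_deg]; omega)
    have h1 : (((X:ℂ[X]) - C 1) * (u * v)).coeff (p+q) = 0 := by
      apply coeff_eq_zero_of_natDegree_lt
      rw [natDegree_mul (X_sub_C_ne_zero (1:ℂ)) (mul_ne_zero hu_monic.ne_zero hv_monic.ne_zero),
        natDegree_X_sub_C, huv_deg]
      omega
    have h2 : ((((X:ℂ[X]) - C 1) ^ 2) * (u * v)).coeff (p+q) = 1 := by
      have hm : ((((X:ℂ[X]) - C 1) ^ 2) * (u * v)).Monic :=
        ((monic_X_sub_C (1:ℂ)).pow 2).mul (hu_monic.mul hv_monic)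
      have hd : ((((X:ℂ[X]) - C 1) ^ 2) * (u * v)).natDegree = p + q := by
        rw [natDegree_mul (pow_ne_zero 2 (X_sub_C_ne_zero (1:ℂ)))
          (mul_ne_zero hu_monic.ne_zero hv_monic.ne_zero), natDegree_pow, natDegree_X_sub_C,
          huv_deg]
        omega
      rw [← hd]
      exact hm.coeff_natDegree
    rw [hx, hexp, coeff_add, coeff_add, coeff_C_mul, coeff_C_mul, coeff_C_mul, h0, h1, h2]
    ring
  have hc2 : ((((X:ℂ[X]) - C 1) ^ 3) * P2).coeff (p+q) = P2.coeff (p+q-3) := by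
    have hexp : (((X:ℂ[X]) - C 1) ^ 3) * P2
        = X^3 * P2 - 3*(X^2*P2) + 3*(X*P2) - P2 := by
      simp only [C_1]
      ring
    have e1' : ((X:ℂ[X])^3 * P2).coeff (p+q) = P2.coeff (p+q-3) := by
      conv_lhs => rw [show p + q = (p + q - 3) + 3 from by omega]
      rw [coeff_X_pow_mul]
    have e2' : ((X:ℂ[X])^2 * P2).coeff (p+q) = 0 := by
      apply coeff_eq_zero_of_natDegree_lt
      have h := natDegree_mul_le (p := (X:ℂ[X])^2) (q := P2)
      rw [natDegree_X_pow] at h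
      omega
    have e3' : ((X:ℂ[X]) * P2).coeff (p+q) = 0 := by
      apply coeff_eq_zero_of_natDegree_lt
      have h := natDegree_mul_le (p := (X:ℂ[X])) (q := P2)
      rw [natDegree_X] at h
      omega
    have e4' : P2.coeff (p+q) = 0 := coeff_eq_zero_of_natDegree_lt (by omega)
    have e5' : ∀ w : ℂ[X], ((3:ℂ[X]) * w).coeff (p+q) = 3 * w.coeff (p+q) := by
      intro w; simp
    rw [hexp, coeff_sub, coeff_add, coeff_sub, e1', e5', e5', e2', e3', e4']
    ring
  -- Lagrange sum
  have hcards : (Sp ∪ Sq).card = p + q - 2 := by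
    rw [Finset.card_union_of_disjoint hdisj, hcardp, hcardq]
    omega
  have hdeglt : P2.degree < (((Sp ∪ Sq).card : ℕ) : WithBot ℕ) := by
    rw [hcards]
    rcases eq_or_ne P2 0 with h | h
    · rw [h, degree_zero]
      exact WithBot.bot_lt_coe _
    · rw [degree_eq_natDegree h]
      exact_mod_cast (by omega : P2.natDegree < p + q - 2)
  have hsum := sum_eval_div_prod (Sp ∪ Sq) P2 hdeglt
  rw [hcards, show p + q - 2 - 1 = p + q - 3 from by omega, Finset.sum_union hdisj] at hsum
  -- per-term values
  have htermp : ∀ lam ∈ Sp, P2.eval lam * (∏ r' ∈ (Sp ∪ Sq).erase lam, (lam - r'))⁻¹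
      = 1/(p:ℂ) * (lam ^ n / ((1 - lam ^ q) * (1 - lam))) := by
    intro lam hlam
    obtain ⟨hlp, hl1, hl0, hlq⟩ := hmemSp lam hlam
    have hlnot : lam ∉ Sq := fun h => hlq (hmemSq lam h).1
    have herase : (Sp ∪ Sq).erase lam = (Sp.erase lam) ∪ Sq := by
      rw [Finset.erase_union_distrib, Finset.erase_eq_of_notMem hlnot]
    have hdisj2 : Disjoint (Sp.erase lam) Sq := hdisj.mono_left (Finset.erase_subset _ _)
    rw [herase, Finset.prod_union hdisj2]
    have hvprod : ∏ r' ∈ Sq, (lam - r') = v.eval lam := by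
      rw [hv_prod, eval_prod]; simp
    have hulam : u.eval lam = 0 := by
      rw [hu_prod, eval_prod]
      exact Finset.prod_eq_zero hlam (by simp)
    have hgprod : ∏ r' ∈ Sp.erase lam, (lam - r')
        = (∏ μ ∈ Sp.erase lam, ((X:ℂ[X]) - C μ)).eval lam := by
      rw [eval_prod]; simp
    have hsplit : u = ((X:ℂ[X]) - C lam) * ∏ μ ∈ Sp.erase lam, (X - C μ) := by
      rw [hu_prod]
      exact (Finset.mul_prod_erase _ _ hlam).symm
    have hdu : (derivative u).eval lam = (∏ μ ∈ Sp.erase lam, ((X:ℂ[X]) - C μ)).eval lam := by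
      have hdd := congrArg derivative hsplit
      rw [derivative_mul] at hdd
      rw [hdd]
      simp
    have hd1 := congrArg derivative hu_mul
    simp only [derivative_mul, derivative_sub, derivative_X, derivative_C, derivative_one,
      derivative_X_pow, mul_one, sub_zero, mul_zero, add_zero, zero_mul] at hd1
    have hd2 := congrArg (eval lam) hd1
    simp only [eval_add, eval_mul, eval_sub, eval_X, eval_C, eval_pow, eval_natCast,
      eval_one] at hd2
    have hg : (lam - 1) * ((∏ μ ∈ Sp.erase lam, ((X:ℂ[X]) - C μ)).eval lam)
        = (p:ℂ) * lam ^ (p-1) := by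
      rw [← hdu]
      linear_combination hd2 - hulam
    have hveq : (lam - 1) * v.eval lam = lam ^ q - 1 := by
      have hh := congrArg (eval lam) hv_mul
      simp only [eval_mul, eval_sub, eval_pow, eval_X, eval_C, eval_one] at hh
      linear_combination hh
    have hPeq : P2.eval lam * (lam - 1) ^ 3 = lam ^ (n-1) := by
      have hh := congrArg (eval lam) hP2
      simp only [eval_sub, eval_mul, eval_add, eval_pow, eval_C, eval_X, eval_one, hulam,
        zero_mul, mul_zero, sub_zero] at hh
      linear_combination -hh
    rw [hgprod, hvprod]
    exact term_value lam _ _ _ n p q hp hn hP0 hl0 hl1 hlp hlq hg hveq hPeq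
  have htermq : ∀ lam ∈ Sq, P2.eval lam * (∏ r' ∈ (Sp ∪ Sq).erase lam, (lam - r'))⁻¹
      = 1/(q:ℂ) * (lam ^ n / ((1 - lam ^ p) * (1 - lam))) := by
    intro lam hlam
    obtain ⟨hlq', hl1, hl0, hlp'⟩ := hmemSq lam hlam
    have hlnot : lam ∉ Sp := fun h => hlp' (hmemSp lam h).1
    have herase : (Sp ∪ Sq).erase lam = Sp ∪ (Sq.erase lam) := by
      rw [Finset.erase_union_distrib, Finset.erase_eq_of_notMem hlnot]
    have hdisj2 : Disjoint Sp (Sq.erase lam) := hdisj.mono_right (Finset.erase_subset _ _)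
    rw [herase, Finset.prod_union hdisj2]
    have huprod : ∏ r' ∈ Sp, (lam - r') = u.eval lam := by
      rw [hu_prod, eval_prod]; simp
    have hvlam : v.eval lam = 0 := by
      rw [hv_prod, eval_prod]
      exact Finset.prod_eq_zero hlam (by simp)
    have hgprod : ∏ r' ∈ Sq.erase lam, (lam - r')
        = (∏ μ ∈ Sq.erase lam, ((X:ℂ[X]) - C μ)).eval lam := by
      rw [eval_prod]; simp
    have hsplit : v = ((X:ℂ[X]) - C lam) * ∏ μ ∈ Sq.erase lam, (X - C μ) := by
      rw [hv_prod]
      exact (Finset.mul_prod_erase _ _ hlam).symm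
    have hdu : (derivative v).eval lam = (∏ μ ∈ Sq.erase lam, ((X:ℂ[X]) - C μ)).eval lam := by
      have hdd := congrArg derivative hsplit
      rw [derivative_mul] at hdd
      rw [hdd]
      simp
    have hd1 := congrArg derivative hv_mul
    simp only [derivative_mul, derivative_sub, derivative_X, derivative_C, derivative_one,
      derivative_X_pow, mul_one, sub_zero, mul_zero, add_zero, zero_mul] at hd1
    have hd2 := congrArg (eval lam) hd1
    simp only [eval_add, eval_mul, eval_sub, eval_X, eval_C, eval_pow, eval_natCast,
      eval_one] at hd2
    have hg : (lam - 1) * ((∏ μ ∈ Sq.erase lam, ((X:ℂ[X]) - C μ)).eval lam)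
        = (q:ℂ) * lam ^ (q-1) := by
      rw [← hdu]
      linear_combination hd2 - hvlam
    have hueq : (lam - 1) * u.eval lam = lam ^ p - 1 := by
      have hh := congrArg (eval lam) hu_mul
      simp only [eval_mul, eval_sub, eval_pow, eval_X, eval_C, eval_one] at hh
      linear_combination hh
    have hPeq : P2.eval lam * (lam - 1) ^ 3 = lam ^ (n-1) := by
      have hh := congrArg (eval lam) hP2
      simp only [eval_sub, eval_mul, eval_add, eval_pow, eval_C, eval_X, eval_one, hvlam,
        zero_mul, mul_zero, sub_zero] at hh
      linear_combination -hh
    rw [hgprod, huprod, mul_comm (u.eval lam) _]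
    exact term_value lam _ _ _ n q p hq hn hQ0 hl0 hl1 hlq' hlp' hg hueq hPeq
  -- assemble
  have hLp : ∑ r ∈ Sp, P2.eval r * (∏ r' ∈ (Sp ∪ Sq).erase r, (r - r'))⁻¹
      = (1/(p:ℂ)) * ∑ z ∈ Sp, z ^ n / ((1 - z ^ q) * (1 - z)) := by
    rw [Finset.mul_sum]
    exact Finset.sum_congr rfl fun lam hlam => by rw [htermp lam hlam]
  have hLq : ∑ r ∈ Sq, P2.eval r * (∏ r' ∈ (Sp ∪ Sq).erase r, (r - r'))⁻¹
      = (1/(q:ℂ)) * ∑ z ∈ Sq, z ^ n / ((1 - z ^ p) * (1 - z)) := by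
    rw [Finset.mul_sum]
    exact Finset.sum_congr rfl fun lam hlam => by rw [htermq lam hlam]
  rw [← hLp, ← hLq, hsum, ← hc2, ← hP2, hc1]
  -- final scalar identity
  have hn1 : ((n-1:ℕ):ℂ) = (n:ℂ) - 1 := by
    rw [Nat.cast_sub hn, Nat.cast_one]
  have hn12 : ((n-1:ℕ):ℂ) * ((n-1-1:ℕ):ℂ) = ((n:ℂ) - 1) * ((n:ℂ) - 2) := by
    rcases Nat.lt_or_ge n 2 with h2 | h2
    · have hne : n = 1 := by omega
      subst hne
      norm_num
    · have e : n - 1 - 1 = n - 2 := by omega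
      rw [hn1, e, Nat.cast_sub h2]
      push_cast
      ring
  rw [hCcdef, hBdef, hAdef, hn12, hn1]
  have hiP : (p:ℂ) * ((p:ℂ))⁻¹ = 1 := mul_inv_cancel₀ hP0
  have hiQ : (q:ℂ) * ((q:ℂ))⁻¹ = 1 := mul_inv_cancel₀ hQ0
  linear_combination (((-5:ℂ)/4)*(q:ℂ)*((q:ℂ))⁻¹^2 + ((23:ℂ)/12)*(q:ℂ)*((p:ℂ))⁻¹*((q:ℂ))⁻¹^2 + ((1:ℂ)/2)*(q:ℂ)*(n:ℂ)*((q:ℂ))⁻¹^2 + (-1:ℂ)*(q:ℂ)*(n:ℂ)*((p:ℂ))⁻¹*((q:ℂ))⁻¹^2 + ((1:ℂ)/4)*(q:ℂ)^2*((q:ℂ))⁻¹^2 + (1:ℂ)*(q:ℂ)^2*((q:ℂ))⁻¹^3 + ((-5:ℂ)/4)*(q:ℂ)^2*((p:ℂ))⁻¹*((q:ℂ))⁻¹^2 + (-1:ℂ)*(q:ℂ)^2*((p:ℂ))⁻¹*((q:ℂ))⁻¹^3 + ((1:ℂ)/2)*(q:ℂ)^2*(n:ℂ)*((p:ℂ))⁻¹*((q:ℂ))⁻¹^2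 + ((-1:ℂ)/2)*(q:ℂ)^3*((q:ℂ))⁻¹^3 + ((1:ℂ)/6)*(q:ℂ)^3*((p:ℂ))⁻¹*((q:ℂ))⁻¹^2 + (1:ℂ)*(q:ℂ)^3*((p:ℂ))⁻¹*((q:ℂ))⁻¹^3 + ((-1:ℂ)/4)*(q:ℂ)^4*((p:ℂ))⁻¹*((q:ℂ))⁻¹^3 + ((1:ℂ)/6)*(p:ℂ)*(q:ℂ)*((q:ℂ))⁻¹^2 + ((-5:ℂ)/4)*(p:ℂ)*(q:ℂ)*((p:ℂ))⁻¹*((q:ℂ))⁻¹^2 + ((1:ℂ)/2)*(p:ℂ)*(q:ℂ)*(n:ℂ)*((p:ℂ))⁻¹*((q:ℂ))⁻¹^2 + ((-1:ℂ)/4)*(p:ℂ)*(q:ℂ)^2*((q:ℂ))⁻¹^3 + ((1:ℂ)/4)*(p:ℂ)*(q:ℂ)^2*((p:ℂ))⁻¹*((q:ℂ))⁻¹^2 + (1:ℂ)*(p:ℂ)*(q:ℂ)^2*((p:ℂ))⁻¹*((q:ℂ))⁻¹^3 + (-1:ℂ)*(p:ℂ)*(q:ℂ)^2*((p:ℂ))⁻¹^2*((q:ℂ))⁻¹^3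 + ((-1:ℂ)/2)*(p:ℂ)*(q:ℂ)^3*((p:ℂ))⁻¹*((q:ℂ))⁻¹^3 + (1:ℂ)*(p:ℂ)*(q:ℂ)^3*((p:ℂ))⁻¹^2*((q:ℂ))⁻¹^3 + ((-1:ℂ)/4)*(p:ℂ)*(q:ℂ)^4*((p:ℂ))⁻¹^2*((q:ℂ))⁻¹^3 + ((1:ℂ)/6)*(p:ℂ)^2*(q:ℂ)*((p:ℂ))⁻¹*((q:ℂ))⁻¹^2 + ((-1:ℂ)/4)*(p:ℂ)^2*(q:ℂ)^2*((p:ℂ))⁻¹*((q:ℂ))⁻¹^3 + (1:ℂ)*(p:ℂ)^2*(q:ℂ)^2*((p:ℂ))⁻¹^2*((q:ℂ))⁻¹^3 + ((-1:ℂ)/2)*(p:ℂ)^2*(q:ℂ)^3*((p:ℂ))⁻¹^2*((q:ℂ))⁻¹^3 + ((-1:ℂ)/4)*(p:ℂ)^3*(q:ℂ)^2*((p:ℂ))⁻¹^2*((q:ℂ))⁻¹^3) * hiP + (((-1:ℂ)/4) + ((-1:ℂ)/4)*((q:ℂ))⁻¹ + ((-1:ℂ)/4)*((p:ℂ))⁻¹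 + ((11:ℂ)/12)*((p:ℂ))⁻¹*((q:ℂ))⁻¹ + ((1:ℂ)/2)*(n:ℂ)*((q:ℂ))⁻¹ + ((1:ℂ)/2)*(n:ℂ)*((p:ℂ))⁻¹ + (-1:ℂ)*(n:ℂ)*((p:ℂ))⁻¹*((q:ℂ))⁻¹ + ((-1:ℂ)/4)*(q:ℂ)*((q:ℂ))⁻¹ + (1:ℂ)*(q:ℂ)*((q:ℂ))⁻¹^2 + ((-1:ℂ)/12)*(q:ℂ)*((p:ℂ))⁻¹ + ((-1:ℂ)/4)*(q:ℂ)*((p:ℂ))⁻¹*((q:ℂ))⁻¹ + (-1:ℂ)*(q:ℂ)*((p:ℂ))⁻¹*((q:ℂ))⁻¹^2 + ((1:ℂ)/2)*(q:ℂ)*(n:ℂ)*((p:ℂ))⁻¹*((q:ℂ))⁻¹ + ((-1:ℂ)/2)*(q:ℂ)^2*((q:ℂ))⁻¹^2 + ((-1:ℂ)/12)*(q:ℂ)^2*((p:ℂ))⁻¹*((q:ℂ))⁻¹ + (1:ℂ)*(q:ℂ)^2*((p:ℂ))⁻¹*((q:ℂ))⁻¹^2 + ((-1:ℂ)/4)*(q:ℂ)^3*((p:ℂ))⁻¹*((q:ℂ))⁻¹^2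 + ((-1:ℂ)/12)*(p:ℂ)*((q:ℂ))⁻¹ + ((-1:ℂ)/4)*(p:ℂ)*(q:ℂ)*((q:ℂ))⁻¹^2) * hiQ
end

section
/- Let $a$ and $b$ be coprime positive integers and $n$ a positive integer. Then the number of ways to write $n = k_0 a + k_1 b$ with $k_0, k_1 \in \mathbb{Z}_{\geq 0}$ equals $\frac{n}{ab} + \frac{1}{2}\left(\frac{1}{a} + \frac{1}{b}\right) + \frac{1}{a}\sum_{\lambda^a=1,\lambda\neq 1} \frac{\lambda^{-n}}{1-\lambda^b} + \frac{1}{b}\sum_{\lambda^b=1,\lambda\neq 1} \frac{\lambda^{-n}}{1-\lambda^a}$ (Popoviciu-type formula via Fourier-Dedekind sums). -/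
open Finset Polynomial


lemma nthRootsFinset_image (a : ℕ) (ha : 0 < a) {ζ : ℂ} (hζ : IsPrimitiveRoot ζ a) :
    nthRootsFinset a (1 : ℂ) = (range a).image (ζ ^ ·) := by
  haveI : NeZero a := ⟨ha.ne'⟩
  ext z
  simp only [mem_nthRootsFinset ha, mem_image, mem_range]
  constructor
  · intro hz
    obtain ⟨i, hi, hiz⟩ := hζ.eq_pow_of_pow_eq_one hz
    exact ⟨i, hi, hiz⟩
  · rintro ⟨i, -, rfl⟩
    rw [← pow_mul, mul_comm, pow_mul, hζ.pow_eq_one, one_pow]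

lemma sum_pow_nthRoots (a s : ℕ) (hs : 0 < s) (hsa : s < a) :
    ∑ z ∈ nthRootsFinset a (1 : ℂ), z ^ s = 0 := by
  have ha : 0 < a := hs.trans hsa
  obtain ⟨ζ, hζ⟩ : ∃ ζ : ℂ, IsPrimitiveRoot ζ a :=
    ⟨_, Complex.isPrimitiveRoot_exp a ha.ne'⟩
  rw [nthRootsFinset_image a ha hζ, sum_image (fun i hi j hj h =>
    hζ.pow_inj (mem_range.mp hi) (mem_range.mp hj) h)]
  have h1 : ζ ^ s ≠ 1 := by
    intro h
    exact absurd (Nat.le_of_dvd hs (hζ.dvd_of_pow_eq_one s h)) (not_le.mpr hsa)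
  calc ∑ i ∈ range a, (ζ ^ i) ^ s = ∑ i ∈ range a, (ζ ^ s) ^ i := by
        simp [← pow_mul, mul_comm]
    _ = ((ζ ^ s) ^ a - 1) / (ζ ^ s - 1) := geom_sum_eq h1 a
    _ = 0 := by
        rw [← pow_mul, mul_comm, pow_mul, hζ.pow_eq_one, one_pow, sub_self, zero_div]

lemma card_nthRootsFinset' (a : ℕ) (ha : 0 < a) : (nthRootsFinset a (1 : ℂ)).card = a :=
  (Complex.isPrimitiveRoot_exp a ha.ne').card_nthRootsFinset

lemma mem_erase_facts {a : ℕ} (ha : 0 < a) {z : ℂ} (hz : z ∈ (nthRootsFinset a (1 : ℂ)).erase 1) :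
    z ^ a = 1 ∧ z ≠ 1 ∧ z ≠ 0 ∧ 1 - z ≠ 0 := by
  obtain ⟨hz1, hz2⟩ := Finset.mem_erase.mp hz
  refine ⟨(Polynomial.mem_nthRootsFinset ha 1).mp hz2, hz1, ?_, ?_⟩
  · rintro rfl
    have := (Polynomial.mem_nthRootsFinset ha 1).mp hz2
    rw [zero_pow ha.ne'] at this
    exact one_ne_zero this.symm
  · intro h
    exact hz1 (by linear_combination -h)

lemma sum_inv_one_sub (a : ℕ) (ha : 0 < a) :
    ∑ z ∈ (nthRootsFinset a (1 : ℂ)).erase 1, 1 / (1 - z) = ((a : ℂ) - 1) / 2 := by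
  have key : ∑ z ∈ (nthRootsFinset a (1 : ℂ)).erase 1, 1 / (1 - z)
      = ∑ z ∈ (nthRootsFinset a (1 : ℂ)).erase 1, (1 - 1 / (1 - z)) := by
    refine Finset.sum_nbij' (i := fun z => z⁻¹) (j := fun z => z⁻¹) ?_ ?_ ?_ ?_ ?_
    · intro z hz
      obtain ⟨h1, h2, h3, h4⟩ := mem_erase_facts ha hz
      refine Finset.mem_erase.mpr ⟨?_, (Polynomial.mem_nthRootsFinset ha 1).mpr (by
        rw [inv_pow, h1, inv_one])⟩
      simpa using inv_eq_one.not.mpr h2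
    · intro z hz
      obtain ⟨h1, h2, h3, h4⟩ := mem_erase_facts ha hz
      refine Finset.mem_erase.mpr ⟨?_, (Polynomial.mem_nthRootsFinset ha 1).mpr (by
        rw [inv_pow, h1, inv_one])⟩
      simpa using inv_eq_one.not.mpr h2
    · intro z hz; simp
    · intro z hz; simp
    · intro z hz
      obtain ⟨h1, h2, h3, h4⟩ := mem_erase_facts ha hz
      have h5 : 1 - z⁻¹ ≠ 0 := by
        intro h
        exact h2 (by field_simp at h; linear_combination h)
      have h6 : z - 1 ≠ 0 := sub_ne_zero.mpr h2
      field_simp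
      ring
  have hcard : ((nthRootsFinset a (1 : ℂ)).erase 1).card = a - 1 := by
    rw [Finset.card_erase_of_mem (Polynomial.one_mem_nthRootsFinset ha),
      card_nthRootsFinset' a ha]
  have key2 : ∑ z ∈ (nthRootsFinset a (1 : ℂ)).erase 1, 1 / (1 - z)
      = ((a - 1 : ℕ) : ℂ) - ∑ z ∈ (nthRootsFinset a (1 : ℂ)).erase 1, 1 / (1 - z) := by
    conv_lhs => rw [key]
    rw [Finset.sum_sub_distrib, Finset.sum_const, hcard, nsmul_eq_mul, mul_one]
  have hcast : ((a - 1 : ℕ) : ℂ) = (a : ℂ) - 1 := by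
    push_cast [Nat.cast_sub ha]; ring
  rw [hcast] at key2
  linear_combination key2 / 2

lemma U_eval (a : ℕ) (ha : 0 < a) (s : ℕ) (hsa : s < a) :
    ∑ z ∈ (nthRootsFinset a (1 : ℂ)).erase 1, z ^ s / (1 - z)
      = ((a : ℂ) - 1) / 2 - (((a - s) % a : ℕ) : ℂ) := by
  induction s with
  | zero =>
      simp only [pow_zero, Nat.sub_zero, Nat.mod_self, Nat.cast_zero, sub_zero]
      exact sum_inv_one_sub a ha
  | succ s ih =>
      have hs' : s < a := Nat.lt_of_succ_lt hsa
      have step : ∀ z ∈ (nthRootsFinset a (1 : ℂ)).erase 1,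
          z ^ (s + 1) / (1 - z) = z ^ s / (1 - z) - z ^ s := by
        intro z hz
        obtain ⟨h1, h2, h3, h4⟩ := mem_erase_facts ha hz
        field_simp
        ring
      rw [Finset.sum_congr rfl step, Finset.sum_sub_distrib, ih hs']
      have hsum : ∑ z ∈ (nthRootsFinset a (1 : ℂ)).erase 1, z ^ s
          = (if s = 0 then ((a : ℂ) - 1) else -1) := by
        rw [Finset.sum_erase_eq_sub (Polynomial.one_mem_nthRootsFinset ha), one_pow]
        by_cases h0 : s = 0
        · subst h0
          simp [Finset.sum_const, card_nthRootsFinset' a ha]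
        · rw [sum_pow_nthRoots a s (Nat.pos_of_ne_zero h0) hs']
          simp [h0]
      rw [hsum]
      by_cases h0 : s = 0
      · subst h0
        rw [if_pos rfl]
        have e1 : (a - 1) % a = a - 1 := Nat.mod_eq_of_lt (by omega)
        have e2 : (a - 0) % a = 0 := by simp
        rw [e1, e2, Nat.cast_sub (by omega)]
        push_cast
        ring
      · rw [if_neg h0]
        have e1 : (a - (s + 1)) % a = a - (s + 1) := Nat.mod_eq_of_lt (by omega)
        have e2 : (a - s) % a = a - s := Nat.mod_eq_of_lt (by omega)
        rw [e1, e2, Nat.cast_sub (by omega), Nat.cast_sub (by omega)]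
        push_cast
        ring
lemma pow_mod_of_pow_eq_one {z : ℂ} {a : ℕ} (hz : z ^ a = 1) (k : ℕ) :
    z ^ k = z ^ (k % a) := by
  conv_lhs => rw [← Nat.mod_add_div k a]
  rw [pow_add, pow_mul, hz, one_pow, mul_one]

lemma sum_main (a b n : ℕ) (ha : 0 < a) (hb : 0 < b) (hab : Nat.Coprime b a) :
    ∑ z ∈ (nthRootsFinset a (1 : ℂ)).erase 1, z ^ (-(n : ℤ)) / (1 - z ^ b)
      = ((a : ℂ) - 1) / 2 - (((n : ZMod a) * (b : ZMod a)⁻¹).val : ℂ) := by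
  by_cases ha1 : a = 1
  · subst ha1
    have hval : ((n : ZMod 1) * (b : ZMod 1)⁻¹).val = 0 := by
      have := ZMod.val_lt ((n : ZMod 1) * (b : ZMod 1)⁻¹)
      omega
    have hempty : (nthRootsFinset 1 (1 : ℂ)).erase 1 = ∅ := by
      ext z
      simp only [Finset.mem_erase, Polynomial.mem_nthRootsFinset Nat.one_pos, pow_one,
        Finset.notMem_empty, iff_false, not_and]
      tauto
    rw [hempty, hval]
    simp
  · have ha2 : 1 < a := lt_of_le_of_ne ha (Ne.symm ha1)
    haveI : NeZero a := ⟨by omega⟩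
    obtain ⟨b', -, hb'⟩ := Nat.exists_mul_mod_eq_one_of_coprime hab ha2
    set m := ((-(n : ZMod a)) * (b : ZMod a)⁻¹).val with hm
    have hmlt : m < a := ZMod.val_lt _
    have hbinv : (b : ZMod a) * (b : ZMod a)⁻¹ = 1 := ZMod.coe_mul_inv_eq_one b hab
    have hdvd : a ∣ b * m + n := by
      rw [← ZMod.natCast_eq_zero_iff]
      push_cast
      rw [hm, ZMod.natCast_zmod_val]
      rw [show (b : ZMod a) * (-(n : ZMod a) * (b : ZMod a)⁻¹)
          = -(n : ZMod a) * ((b : ZMod a) * (b : ZMod a)⁻¹) by ring, hbinv, mul_one]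
      ring
    have hzpow : ∀ z : ℂ, z ^ a = 1 → z ^ (-(n : ℤ)) = (z ^ b) ^ m := by
      intro z hz
      have hz0 : z ≠ 0 := by
        rintro rfl
        rw [zero_pow (by omega : a ≠ 0)] at hz
        exact zero_ne_one hz
      rw [zpow_neg, zpow_natCast, ← pow_mul]
      have h1 : z ^ (b * m) * z ^ n = 1 := by
        rw [← pow_add, pow_mod_of_pow_eq_one hz, Nat.mod_eq_zero_of_dvd hdvd, pow_zero]
      exact (eq_inv_of_mul_eq_one_left h1).symm
    have memfacts : ∀ z ∈ (nthRootsFinset a (1 : ℂ)).erase 1, z ^ a = 1 ∧ z ≠ 1 := by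
      intro z hz
      obtain ⟨h1, h2⟩ := Finset.mem_erase.mp hz
      exact ⟨(Polynomial.mem_nthRootsFinset ha 1).mp h2, h1⟩
    have hpowmem : ∀ (c : ℕ) (z : ℂ), z ^ a = 1 → (z ^ c) ^ a = 1 := by
      intro c z hz
      rw [← pow_mul, mul_comm, pow_mul, hz, one_pow]
    have hww : ∀ w : ℂ, w ^ a = 1 → (w ^ b') ^ b = w := by
      intro w hw
      rw [← pow_mul, mul_comm b' b, pow_mod_of_pow_eq_one hw, hb', pow_one]
    have reindex : ∑ z ∈ (nthRootsFinset a (1 : ℂ)).erase 1, z ^ (-(n : ℤ)) / (1 - z ^ b)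
        = ∑ w ∈ (nthRootsFinset a (1 : ℂ)).erase 1, w ^ m / (1 - w) := by
      refine Finset.sum_nbij' (i := fun z => z ^ b) (j := fun w => w ^ b') ?_ ?_ ?_ ?_ ?_
      · intro z hz
        obtain ⟨h1, h2⟩ := memfacts z hz
        refine Finset.mem_erase.mpr ⟨?_, (Polynomial.mem_nthRootsFinset ha 1).mpr
          (hpowmem b z h1)⟩
        intro hzb
        have := (pow_gcd_eq_one (a := z)).mpr ⟨hzb, h1⟩
        rw [hab] at this
        exact h2 (by simpa using this)
      · intro w hw
        obtain ⟨h1, h2⟩ := memfacts w hw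
        refine Finset.mem_erase.mpr ⟨?_, (Polynomial.mem_nthRootsFinset ha 1).mpr
          (hpowmem b' w h1)⟩
        intro hwb
        have hwb' : w ^ b' = 1 := hwb
        exact h2 (by rw [← hww w h1, hwb', one_pow])
      · intro z hz
        show (z ^ b) ^ b' = z
        rw [← pow_mul, pow_mod_of_pow_eq_one (memfacts z hz).1, hb', pow_one]
      · intro w hw
        exact hww w (memfacts w hw).1
      · intro z hz
        show z ^ (-(n : ℤ)) / (1 - z ^ b) = (z ^ b) ^ m / (1 - z ^ b)
        rw [hzpow z (memfacts z hz).1]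
    rw [reindex, U_eval a ha m hmlt]
    congr 1
    have hlt : (a - m) % a < a := Nat.mod_lt _ (by omega)
    have hcongr : (((a - m) % a : ℕ) : ZMod a) = (n : ZMod a) * (b : ZMod a)⁻¹ := by
      rw [ZMod.natCast_mod, Nat.cast_sub (le_of_lt hmlt), ZMod.natCast_self, zero_sub,
        hm, ZMod.natCast_zmod_val]
      ring
    have : (a - m) % a = ((n : ZMod a) * (b : ZMod a)⁻¹).val := by
      calc (a - m) % a = ((((a - m) % a : ℕ) : ZMod a)).val := (ZMod.val_cast_of_lt hlt).symm
        _ = ((n : ZMod a) * (b : ZMod a)⁻¹).val := by rw [hcongr]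
    rw [this]


lemma count_eq (a b n k1 k0 c : ℕ) (ha : 0 < a) (hb : 0 < b)
    (hk1a : k1 < a) (hk0b : k0 < b)
    (hmod : ∀ k1' k0' : ℕ, k0' * a + k1' * b = n → k1' % a = k1)
    (hq : (n : ℤ) + a * b = b * k1 + a * k0 + a * b * c) :
    Nat.card {k : ℕ × ℕ // k.1 * a + k.2 * b = n} = c := by
  have hc1 : ∀ t : ℕ, t < c → (k0 + b * (c - 1 - t)) * a + (k1 + a * t) * b = n := by
    intro t ht
    have h1 : 1 ≤ c := by omega
    have h2 : t ≤ c - 1 := by omega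
    zify [h1, h2]
    linarith [hq]
  have forward : ∀ k0' k1' : ℕ, k0' * a + k1' * b = n →
      (k1' - k1) / a < c ∧ k1 + a * ((k1' - k1) / a) = k1' := by
    intro k0' k1' hk
    have e1 : k1' % a = k1 := hmod k1' k0' hk
    have e2 : k1 ≤ k1' := e1 ▸ Nat.mod_le k1' a
    have e3 : a ∣ k1' - k1 := ⟨k1' / a, by
      conv_lhs => rw [← Nat.div_add_mod k1' a, e1]
      omega⟩
    set t := (k1' - k1) / a with hts
    have e4 : a * t = k1' - k1 := Nat.mul_div_cancel' e3
    have e5 : k1 + a * t = k1' := by rw [e4]; exact Nat.add_sub_cancel' e2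
    refine ⟨?_, e5⟩
    have e6 : k1' * b ≤ n := (Nat.le_add_left _ _).trans_eq hk
    have e7 : ((k1 : ℤ) + a * t) * b ≤ n := by
      rw_mod_cast [e5]; exact_mod_cast e6
    have h8 : (a : ℤ) * k0 < a * b :=
      mul_lt_mul_of_pos_left (by exact_mod_cast hk0b) (by exact_mod_cast ha)
    have h9 : (a : ℤ) * b * t < a * b * c := by nlinarith [hq, e7, h8]
    have h10 : (t : ℤ) < c := by
      have hab : (0 : ℤ) < a * b := by positivity
      exact lt_of_mul_lt_mul_left (by linarith [h9]) (le_of_lt hab)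
    exact_mod_cast h10
  let e : {k : ℕ × ℕ // k.1 * a + k.2 * b = n} ≃ Fin c :=
    { toFun := fun k => ⟨(k.1.2 - k1) / a, (forward k.1.1 k.1.2 k.2).1⟩
      invFun := fun t => ⟨(k0 + b * (c - 1 - t), k1 + a * t), hc1 t t.2⟩
      left_inv := by
        rintro ⟨⟨k0', k1'⟩, hk⟩
        have hk' : k0' * a + k1' * b = n := hk
        have h1 := (forward k0' k1' hk').2
        have h2 := hc1 ((k1' - k1) / a) (forward k0' k1' hk').1
        apply Subtype.ext
        apply Prod.ext
        · simp only
          rw [h1] at h2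
          have h3 : (k0 + b * (c - 1 - (k1' - k1) / a)) * a = k0' * a := by omega
          exact Nat.eq_of_mul_eq_mul_right ha h3
        · exact h1
      right_inv := by
        intro t
        apply Fin.ext
        simp only
        rw [Nat.add_sub_cancel_left, Nat.mul_div_cancel_left _ ha] }
  rw [Nat.card_eq_of_equiv_fin e]

lemma final_alg (A B N K1 K0 C : ℂ) (hA : A ≠ 0) (hB : B ≠ 0)
    (h : N + A * B = B * K1 + A * K0 + A * B * C) :
    C = N / (A * B) + (1 / 2) * (1 / A + 1 / B) +
      (1 / A) * ((A - 1) / 2 - K1) + (1 / B) * ((B - 1) / 2 - K0) := by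
  have hu : A * A⁻¹ = 1 := mul_inv_cancel₀ hA
  have hv : B * B⁻¹ = 1 := mul_inv_cancel₀ hB
  simp only [div_eq_mul_inv, one_div, mul_inv]
  linear_combination (-(A⁻¹ * B⁻¹)) * h + (-C * B * B⁻¹ - B⁻¹ * K0 + 1 / 2) * hu +
    (-C - A⁻¹ * K1 + A * A⁻¹ - 1 / 2) * hv

theorem popoviciu (a b : ℕ) (ha : 0 < a) (hb : 0 < b) (hab : Nat.Coprime a b)
    (n : ℕ) (hn : 0 < n) :
    (Nat.card {k : ℕ × ℕ // k.1 * a + k.2 * b = n} : ℂ) =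
      (n : ℂ) / (a * b) + (1 / 2) * (1 / a + 1 / b) +
        (1 / a) * ∑ z ∈ (nthRootsFinset a (1 : ℂ)).erase 1,
          z ^ (-(n : ℤ)) / (1 - z ^ b) +
        (1 / b) * ∑ z ∈ (nthRootsFinset b (1 : ℂ)).erase 1,
          z ^ (-(n : ℤ)) / (1 - z ^ a) := by
  haveI : NeZero a := ⟨ha.ne'⟩
  haveI : NeZero b := ⟨hb.ne'⟩
  set k1 := ((n : ZMod a) * (b : ZMod a)⁻¹).val with hk1def
  set k0 := ((n : ZMod b) * (a : ZMod b)⁻¹).val with hk0def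
  have hk1a : k1 < a := ZMod.val_lt _
  have hk0b : k0 < b := ZMod.val_lt _
  have hbinva : (b : ZMod a) * (b : ZMod a)⁻¹ = 1 := ZMod.coe_mul_inv_eq_one b hab.symm
  have hainvb : (a : ZMod b) * (a : ZMod b)⁻¹ = 1 := ZMod.coe_mul_inv_eq_one a hab
  -- the mod fact
  have hmod : ∀ k1' k0' : ℕ, k0' * a + k1' * b = n → k1' % a = k1 := by
    intro k1' k0' hk
    have h1 : ((k0' * a + k1' * b : ℕ) : ZMod a) = (n : ZMod a) := by rw [hk]
    push_cast at h1
    rw [ZMod.natCast_self] at h1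
    have h2 : (k1' : ZMod a) = (k1 : ZMod a) := by
      rw [hk1def, ZMod.natCast_zmod_val]
      calc (k1' : ZMod a) = (k1' : ZMod a) * ((b : ZMod a) * (b : ZMod a)⁻¹) := by
            rw [hbinva, mul_one]
        _ = ((k0' : ZMod a) * 0 + (k1' : ZMod a) * (b : ZMod a)) * (b : ZMod a)⁻¹ := by ring
        _ = (n : ZMod a) * (b : ZMod a)⁻¹ := by rw [h1]
    have h3 := (ZMod.natCast_eq_natCast_iff' _ _ _).mp h2
    rw [Nat.mod_eq_of_lt hk1a] at h3
    exact h3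
  -- congruence facts
  have hc1 : ((b * k1 : ℕ) : ZMod a) = (n : ZMod a) := by
    push_cast
    rw [hk1def, ZMod.natCast_zmod_val]
    calc (b : ZMod a) * ((n : ZMod a) * (b : ZMod a)⁻¹)
        = (n : ZMod a) * ((b : ZMod a) * (b : ZMod a)⁻¹) := by ring
      _ = (n : ZMod a) := by rw [hbinva, mul_one]
  have hc0 : ((a * k0 : ℕ) : ZMod b) = (n : ZMod b) := by
    push_cast
    rw [hk0def, ZMod.natCast_zmod_val]
    calc (a : ZMod b) * ((n : ZMod b) * (a : ZMod b)⁻¹)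
        = (n : ZMod b) * ((a : ZMod b) * (a : ZMod b)⁻¹) := by ring
      _ = (n : ZMod b) := by rw [hainvb, mul_one]
  have hd1 : (a : ℤ) ∣ (n : ℤ) - b * k1 := by
    have := (ZMod.natCast_eq_natCast_iff _ _ _).mp hc1
    have h := this.dvd
    push_cast at h ⊢
    exact h
  have hd0 : (b : ℤ) ∣ (n : ℤ) - a * k0 := by
    have := (ZMod.natCast_eq_natCast_iff _ _ _).mp hc0
    have h := this.dvd
    push_cast at h ⊢
    exact h
  -- the integer D and c
  set D : ℤ := (n : ℤ) + a * b - b * k1 - a * k0 with hD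
  have hDa : (a : ℤ) ∣ D := by
    have : D = ((n : ℤ) - b * k1) + a * ((b : ℤ) - k0) := by rw [hD]; ring
    rw [this]
    exact dvd_add hd1 ⟨(b : ℤ) - k0, rfl⟩
  have hDb : (b : ℤ) ∣ D := by
    have : D = ((n : ℤ) - a * k0) + b * ((a : ℤ) - k1) := by rw [hD]; ring
    rw [this]
    exact dvd_add hd0 ⟨(a : ℤ) - k1, rfl⟩
  have hcop : IsCoprime (a : ℤ) (b : ℤ) := Nat.isCoprime_iff_coprime.mpr hab
  have hDab : (a : ℤ) * b ∣ D := hcop.mul_dvd hDa hDb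
  have hDpos : -(a * b : ℤ) < D := by
    have h1 : (k1 : ℤ) ≤ (a : ℤ) - 1 := by omega
    have h2 : (k0 : ℤ) ≤ (b : ℤ) - 1 := by omega
    have h3 : (1 : ℤ) ≤ n := by exact_mod_cast hn
    have h4 : (1 : ℤ) ≤ a := by exact_mod_cast ha
    have h5 : (1 : ℤ) ≤ b := by exact_mod_cast hb
    have h6 : (b : ℤ) * k1 ≤ b * ((a : ℤ) - 1) :=
      mul_le_mul_of_nonneg_left h1 (by linarith)
    have h7 : (a : ℤ) * k0 ≤ a * ((b : ℤ) - 1) :=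
      mul_le_mul_of_nonneg_left h2 (by linarith)
    rw [hD]
    nlinarith
  obtain ⟨q, hqD⟩ := hDab
  have hq0 : 0 ≤ q := by
    by_contra h
    push_neg at h
    have hq1 : q ≤ -1 := by omega
    have hab0 : (0 : ℤ) < a * b := by positivity
    nlinarith [hqD, hDpos]
  set c : ℕ := q.toNat with hcdef
  have hcq : (c : ℤ) = q := Int.toNat_of_nonneg hq0
  have hq : (n : ℤ) + a * b = b * k1 + a * k0 + a * b * c := by
    rw [hcq]
    have : D = a * b * q := hqD
    rw [hD] at this
    linarith
  rw [count_eq a b n k1 k0 c ha hb hk1a hk0b hmod hq,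
    sum_main a b n ha hb hab.symm, sum_main b a n hb ha hab, ← hk1def, ← hk0def]
  have hC : (n : ℂ) + a * b = b * k1 + a * k0 + a * b * c := by exact_mod_cast hq
  have ha0 : (a : ℂ) ≠ 0 := Nat.cast_ne_zero.mpr ha.ne'
  have hb0 : (b : ℂ) ≠ 0 := Nat.cast_ne_zero.mpr hb.ne'
  exact final_alg a b n k1 k0 c ha0 hb0 hC
end

section
/- Let $a_0, \dots, a_d$ be pairwise coprime positive integers and let $0 < n < a_0 + \cdots + a_d$. Then $\sum_{j=0}^d \sigma_n(a_0, \dots, \hat{a_j}, \dots, a_d; a_j) = -q(a_0, \dots, a_d, -n)$, where $q$ is the polynomial in $n$ given by the principal-part coefficients of $z^{-n}\prod_{j=0}^d(1-z^{a_j})^{-1}$ at $z=1$ (reciprocity law for Fourier-Dedekind sums). -/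
open Finset Polynomial Filter

open Set Asymptotics
open scoped Topology

/-- The Fourier-Dedekind sum `σ_n(a_0,…,â_j,…,a_d; a_j)`. -/
noncomputable def fourierDedekindOmit {d : ℕ} (n : ℤ) (a : Fin (d + 1) → ℕ)
    (j : Fin (d + 1)) : ℂ :=
  (1 / (a j : ℂ)) * ∑ z ∈ (nthRootsFinset (a j) (1 : ℂ)).erase 1,
    z ^ n / ∏ i ∈ Finset.univ.erase j, (1 - z ^ (a i))

lemma littleo_of_tendsto {g : ℂ → ℂ} {t : ℂ}
    (h : Tendsto (fun z => (z - t) * g z) (𝓝[≠] t) (𝓝 0)) :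
    (fun z => g z - g t) =o[𝓝[≠] t] fun z => (z - t)⁻¹ := by
  rw [isLittleO_iff_tendsto']
  · have h2 : Tendsto (fun z : ℂ => (z - t) * g t) (𝓝[≠] t) (𝓝 0) := by
      have h3 : Tendsto (fun z : ℂ => z - t) (𝓝[≠] t) (𝓝 0) := by
        have h4 : Tendsto (fun z : ℂ => z - t) (𝓝 t) (𝓝 (t - t)) :=
          (continuous_id.sub continuous_const).tendsto t
        rw [sub_self] at h4
        exact h4.mono_left nhdsWithin_le_nhds
      simpa using h3.mul_const (g t)
    have := h.sub h2
    simp only [sub_zero] at this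
    refine this.congr' ?_
    filter_upwards [self_mem_nhdsWithin] with z (hz : z ≠ t)
    field_simp
  · filter_upwards [self_mem_nhdsWithin] with z (hz : z ≠ t) h0
    exact absurd (inv_eq_zero.mp h0) (sub_ne_zero.mpr hz)

lemma remove_sings (T : Finset ℂ) (g : ℂ → ℂ)
    (hd : DifferentiableOn ℂ g ((T : Set ℂ)ᶜ))
    (ho : ∀ t ∈ T, Tendsto (fun z => (z - t) * g z) (𝓝[≠] t) (𝓝 0)) :
    ∃ G : ℂ → ℂ, Differentiable ℂ G ∧ ∀ z ∉ T, G z = g z := by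
  classical
  induction T using Finset.induction generalizing g with
  | empty =>
    exact ⟨g, fun z => (hd z (by simp)).differentiableAt (by simp), fun z _ => rfl⟩
  | @insert t T htT IH =>
    have hopen : IsOpen (((insert t T : Finset ℂ) : Set ℂ)ᶜ) :=
      ((insert t T : Finset ℂ).finite_toSet.isClosed).isOpen_compl
    have hsmem : (((insert t T : Finset ℂ) : Set ℂ)ᶜ) ∈ 𝓝[≠] t := by
      refine mem_nhdsWithin.mpr ⟨(T : Set ℂ)ᶜ, (T.finite_toSet.isClosed).isOpen_compl, by simpa, ?_⟩
      intro z hz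
      simp only [Finset.coe_insert, Set.mem_compl_iff, Set.mem_insert_iff] at *
      rintro (rfl | hzT)
      · exact hz.2 rfl
      · exact hz.1 hzT
    have hd' : DifferentiableOn ℂ g (((insert t T : Finset ℂ) : Set ℂ)ᶜ) := by
      refine hd.mono ?_
      intro z hz; simp at hz ⊢; tauto
    have key := Complex.differentiableOn_update_limUnder_insert_of_isLittleO hsmem hd'
      (littleo_of_tendsto (ho t (Finset.mem_insert_self t T)))
    set g' := Function.update g t (limUnder (𝓝[≠] t) g) with hg'
    have hsub : ((T : Set ℂ)ᶜ) ⊆ insert t (((insert t T : Finset ℂ) : Set ℂ)ᶜ) := by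
      intro z hz
      by_cases hzt : z = t
      · simp [hzt]
      · simp only [Set.mem_insert_iff, Finset.coe_insert, Set.mem_compl_iff,
          Set.mem_insert_iff] at *
        tauto
    have hd'' : DifferentiableOn ℂ g' ((T : Set ℂ)ᶜ) := key.mono hsub
    have hagree : ∀ z, z ≠ t → g' z = g z := fun z hz => Function.update_of_ne hz _ _
    have ho' : ∀ s ∈ T, Tendsto (fun z => (z - s) * g' z) (𝓝[≠] s) (𝓝 0) := by
      intro s hs
      refine (ho s (Finset.mem_insert_of_mem hs)).congr' ?_
      have hts : s ≠ t := fun h => htT (h ▸ hs)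
      have : {t}ᶜ ∈ 𝓝[≠] s := by
        refine mem_nhdsWithin.mpr ⟨{t}ᶜ, isOpen_compl_singleton, hts, fun z hz => hz.1⟩
      filter_upwards [this] with z hz
      rw [hagree z hz]
    obtain ⟨G, hG, hGg⟩ := IH g' hd'' ho'
    refine ⟨G, hG, fun z hz => ?_⟩
    have hzt : z ≠ t := fun h => hz (h ▸ Finset.mem_insert_self t T)
    have hzT : z ∉ T := fun h => hz (Finset.mem_insert_of_mem h)
    rw [hGg z hzT, hagree z hzt]

lemma liouville_zero {G : ℂ → ℂ} (hG : Differentiable ℂ G)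
    (h0 : Tendsto G (Bornology.cobounded ℂ) (𝓝 0)) : ∀ z, G z = 0 := by
  have hev : ∀ᶠ z : ℂ in Bornology.cobounded ℂ, ‖G z‖ ≤ 1 := by
    have := h0.norm
    simp only [norm_zero] at this
    exact this.eventually_le_const one_pos
  rw [← comap_norm_atTop, eventually_comap] at hev
  rw [eventually_atTop] at hev
  obtain ⟨R, hR⟩ := hev
  obtain ⟨C, hC⟩ := (isCompact_closedBall (0:ℂ) R).exists_bound_of_continuousOn
    hG.continuous.continuousOn
  have hb : Bornology.IsBounded (Set.range G) := by
    rw [isBounded_iff_forall_norm_le]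
    refine ⟨max C 1, ?_⟩
    rintro y ⟨z, rfl⟩
    by_cases hz : ‖z‖ ≤ R
    · exact le_trans (hC z (by simpa [Metric.mem_closedBall, Complex.dist_eq, sub_zero]
        using hz)) (le_max_left _ _)
    · exact le_trans (hR ‖z‖ (le_of_lt (not_le.mp hz)) z rfl) (le_max_right _ _)
  intro z
  have hconst : ∀ w, G w = G z := fun w => hG.apply_eq_apply_of_bounded hb w z
  have : Tendsto G (Bornology.cobounded ℂ) (𝓝 (G z)) := by
    have : G = fun _ => G z := funext hconst
    rw [this]; exact tendsto_const_nhds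
  have := tendsto_nhds_unique this h0
  rw [hconst z] at this ⊢
  exact this

lemma tendsto_sub_const_cobounded' (w : ℂ) :
    Tendsto (fun z : ℂ => z - w) (Bornology.cobounded ℂ) (Bornology.cobounded ℂ) := by
  rw [← comap_norm_atTop (E := ℂ), tendsto_comap_iff]
  rw [comap_norm_atTop (E := ℂ)]
  refine tendsto_atTop_mono (fun z => ?_) (tendsto_atTop_add_const_right _ (-‖w‖)
    tendsto_norm_cobounded_atTop)
  simpa [Function.comp] using norm_sub_norm_le z w

lemma tendsto_inv_sub_cobounded (w : ℂ) :
    Tendsto (fun z : ℂ => (z - w)⁻¹) (Bornology.cobounded ℂ) (𝓝 0) :=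
  tendsto_inv₀_cobounded.comp (tendsto_sub_const_cobounded' w)

lemma slope_inv_tendsto {m : ℕ} (hm : 0 < m) {t : ℂ} (ht : t ^ m = 1) :
    Tendsto (fun z : ℂ => (z - t) * (1 - z ^ m)⁻¹) (𝓝[≠] t)
      (𝓝 (-(m * t ^ (m - 1)))⁻¹) := by
  have ht0 : t ≠ 0 := by
    intro h; rw [h, zero_pow hm.ne'] at ht; exact zero_ne_one ht
  have hD : HasDerivAt (fun z : ℂ => 1 - z ^ m) (-(m * t ^ (m - 1))) t := by
    simpa using ((hasDerivAt_pow m t).const_sub 1)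
  have hne : (-((m : ℂ) * t ^ (m - 1))) ≠ 0 := by
    simp only [neg_ne_zero]
    exact mul_ne_zero (Nat.cast_ne_zero.mpr hm.ne') (pow_ne_zero _ ht0)
  have hslope := hasDerivAt_iff_tendsto_slope.mp hD
  have := hslope.inv₀ hne
  refine this.congr' ?_
  filter_upwards [self_mem_nhdsWithin] with z (hz : z ≠ t)
  rw [slope_def_field]
  have h1 : (1 : ℂ) - t ^ m = 0 := by rw [ht, sub_self]
  rw [h1, sub_zero, div_eq_mul_inv, mul_inv, inv_inv, mul_comm]

lemma eq_one_of_pow_coprime {z : ℂ} {p q : ℕ} (hp : 0 < p)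
    (hcop : Nat.Coprime p q) (h1 : z ^ p = 1) (h2 : z ^ q = 1) : z = 1 := by
  have hz0 : z ≠ 0 := by
    intro h; rw [h, zero_pow hp.ne'] at h1; exact zero_ne_one h1
  have hic : IsCoprime (p : ℤ) (q : ℤ) := Int.isCoprime_iff_gcd_eq_one.mpr hcop
  obtain ⟨u, v, huv⟩ := hic
  calc z = z ^ (u * p + v * q) := by rw [huv, zpow_one]
    _ = (z ^ (p : ℤ)) ^ u * (z ^ (q : ℤ)) ^ v := by
        rw [zpow_add₀ hz0, mul_comm u, mul_comm v, zpow_mul, zpow_mul]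
    _ = 1 := by
        rw [zpow_natCast, zpow_natCast, h1, h2, one_zpow, one_zpow, one_mul]

lemma residue_tendsto {d : ℕ} (a : Fin (d + 1) → ℕ) (ha : ∀ i, 0 < a i) (n : ℕ)
    (j : Fin (d + 1)) (t : ℂ) (ht : t ^ a j = 1)
    (hP : ∏ i ∈ Finset.univ.erase j, (1 - t ^ a i) ≠ 0) :
    Tendsto (fun z : ℂ => (z - t) * (z ^ n * (∏ i, (1 - z ^ a i))⁻¹)) (𝓝[≠] t)
      (𝓝 (-t ^ (n + 1) / ((a j) * ∏ i ∈ Finset.univ.erase j, (1 - t ^ a i)))) := by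
  have ht0 : t ≠ 0 := by
    intro h; rw [h, zero_pow (ha j).ne'] at ht; exact zero_ne_one ht
  have haj0 : ((a j : ℂ)) ≠ 0 := Nat.cast_ne_zero.mpr (ha j).ne'
  have key := slope_inv_tendsto (ha j) ht
  have cont : Tendsto (fun z : ℂ => z ^ n * (∏ i ∈ Finset.univ.erase j, (1 - z ^ a i))⁻¹)
      (𝓝[≠] t) (𝓝 (t ^ n * (∏ i ∈ Finset.univ.erase j, (1 - t ^ a i))⁻¹)) := by
    refine Tendsto.mono_left ?_ nhdsWithin_le_nhds
    have hcont : Continuous (fun z : ℂ => ∏ i ∈ Finset.univ.erase j, (1 - z ^ a i)) :=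
      continuous_finset_prod _ fun i _ => continuous_const.sub (continuous_pow _)
    exact (continuousAt_pow t n).mul (hcont.continuousAt.inv₀ hP)
  have hmul := key.mul cont
  have heq : (fun z : ℂ => (z - t) * (1 - z ^ a j)⁻¹ *
      (z ^ n * (∏ i ∈ Finset.univ.erase j, (1 - z ^ a i))⁻¹)) =
      fun z : ℂ => (z - t) * (z ^ n * (∏ i, (1 - z ^ a i))⁻¹) := by
    funext z
    rw [← Finset.mul_prod_erase Finset.univ _ (Finset.mem_univ j), mul_inv]
    ring
  rw [heq] at hmul
  convert hmul using 2
  have htinv : t ^ (a j - 1) = t⁻¹ := by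
    refine eq_inv_of_mul_eq_one_left ?_
    rw [← pow_succ, Nat.sub_add_cancel (ha j), ht]
  rw [htinv]
  rw [pow_succ]
  field_simp

lemma f_tendsto_cobounded {d : ℕ} (a : Fin (d + 1) → ℕ) (ha : ∀ i, 0 < a i) (n : ℕ)
    (hn' : n < ∑ j, a j) :
    Tendsto (fun z : ℂ => z ^ n * (∏ j, (1 - z ^ a j))⁻¹) (Bornology.cobounded ℂ) (𝓝 0) := by
  set Sg := ∑ j, a j with hSgdef
  have hinv : Tendsto (fun z : ℂ => z⁻¹) (Bornology.cobounded ℂ) (𝓝 0) :=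
    tendsto_inv₀_cobounded
  have h1 : Tendsto (fun z : ℂ => (z⁻¹) ^ (Sg - n)) (Bornology.cobounded ℂ) (𝓝 0) := by
    have := hinv.pow (Sg - n)
    rwa [zero_pow (Nat.sub_ne_zero_of_lt hn')] at this
  have h2 : Tendsto (fun z : ℂ => ∏ j, ((z⁻¹) ^ a j - 1)⁻¹) (Bornology.cobounded ℂ)
      (𝓝 (∏ j : Fin (d + 1), ((0 : ℂ) ^ a j - 1)⁻¹)) := by
    refine tendsto_finset_prod _ fun j _ => ?_
    have hc : ContinuousAt (fun w : ℂ => (w ^ a j - 1)⁻¹) 0 := by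
      refine ContinuousAt.inv₀ ((continuousAt_pow 0 (a j)).sub continuousAt_const) ?_
      intro h
      rw [zero_pow (ha j).ne'] at h
      simp at h
    exact hc.tendsto.comp hinv
  have hF := h1.mul h2
  rw [zero_mul] at hF
  refine hF.congr' ?_
  filter_upwards [tendsto_norm_cobounded_atTop.eventually_gt_atTop 1] with z hz
  have hz0 : z ≠ 0 := by
    intro h; rw [h, norm_zero] at hz; linarith
  have hfac : ∀ j : Fin (d + 1), (1 : ℂ) - z ^ a j = z ^ a j * ((z⁻¹) ^ a j - 1) := by
    intro j
    rw [mul_sub, ← mul_pow, mul_inv_cancel₀ hz0, one_pow, mul_one]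
  have hprod : ∏ j, ((1 : ℂ) - z ^ a j) = z ^ Sg * ∏ j, ((z⁻¹) ^ a j - 1) := by
    rw [Finset.prod_congr rfl fun j _ => hfac j, Finset.prod_mul_distrib,
      Finset.prod_pow_eq_pow_sum]
  have hzn : z ^ n ≠ 0 := pow_ne_zero _ hz0
  rw [hprod, mul_inv, ← mul_assoc]
  have : z ^ Sg = z ^ n * z ^ (Sg - n) := by
    rw [← pow_add, Nat.add_sub_cancel' hn'.le]
  rw [this, mul_inv, ← mul_assoc, mul_inv_cancel₀ hzn, one_mul, inv_pow]
  rw [Finset.prod_inv_distrib]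

theorem fourier_dedekind_reciprocity (d : ℕ) (a : Fin (d + 1) → ℕ)
    (ha : ∀ i, 0 < a i) (hcop : ∀ i j, i ≠ j → Nat.Coprime (a i) (a j))
    (n : ℕ) (hn : 0 < n) (hn' : n < ∑ j, a j)
    (B : ℕ → ℂ) (L : ℂ)
    (hB : Tendsto
      (fun z : ℂ => z ^ (n : ℕ) * (∏ j, (1 - z ^ (a j)))⁻¹ -
        ∑ k ∈ Finset.Icc 1 (d + 1), B k / (z - 1) ^ k)
      (nhdsWithin 1 {(1 : ℂ)}ᶜ) (nhds L)) :
    ∑ j, fourierDedekindOmit (n : ℤ) a j =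
      -∑ k ∈ Finset.Icc 1 (d + 1), (-1) ^ k * B k := by
  classical
  set A := ∏ j, a j with hAdef
  have hA0 : 0 < A := Finset.prod_pos fun j _ => ha j
  set T : Finset ℂ := nthRootsFinset A (1 : ℂ) with hTdef
  have hmemT : ∀ z : ℂ, z ∈ T ↔ z ^ A = 1 := fun z => Polynomial.mem_nthRootsFinset hA0 (1 : ℂ)
  have hTsub : ∀ z : ℂ, ∀ j, z ^ a j = 1 → z ∈ T := by
    intro z j hz
    rw [hmemT]
    obtain ⟨m, hm⟩ := Finset.dvd_prod_of_mem a (Finset.mem_univ j)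
    rw [← hAdef] at hm
    rw [hm, pow_mul, hz, one_pow]
  have h1T : (1 : ℂ) ∈ T := by rw [hmemT]; exact one_pow A
  have h0T : (0 : ℂ) ∉ T := by rw [hmemT, zero_pow hA0.ne']; exact zero_ne_one
  have hnotT : ∀ z : ℂ, z ∉ T → ∀ j, 1 - z ^ a j ≠ 0 := by
    intro z hz j h
    exact hz (hTsub z j (by linear_combination -h))
  -- the index set of nontrivial roots
  set E : Fin (d + 1) → Finset ℂ := fun j => (nthRootsFinset (a j) (1 : ℂ)).erase 1 with hEdef
  set Λ : Finset ((_ : Fin (d + 1)) × ℂ) := Finset.univ.sigma E with hΛdef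
  have hmemΛ : ∀ p : (_ : Fin (d + 1)) × ℂ, p ∈ Λ ↔ p.2 ≠ 1 ∧ p.2 ^ a p.1 = 1 := by
    intro p
    rw [hΛdef, Finset.mem_sigma, hEdef]
    simp only [Finset.mem_univ, true_and, Finset.mem_erase]
    rw [Polynomial.mem_nthRootsFinset (ha p.1) (1 : ℂ)]
  have hpow_ne : ∀ p ∈ Λ, ∀ i, i ≠ p.1 → 1 - p.2 ^ a i ≠ 0 := by
    intro p hp i hi h
    rw [hmemΛ] at hp
    have h1 : p.2 ^ a i = 1 := by linear_combination -h
    exact hp.1 (eq_one_of_pow_coprime (ha p.1) (hcop p.1 i (Ne.symm hi)) hp.2 h1)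
  have hprodne : ∀ p ∈ Λ, ∏ i ∈ Finset.univ.erase p.1, (1 - p.2 ^ a i) ≠ 0 := by
    intro p hp
    exact Finset.prod_ne_zero_iff.mpr fun i hi =>
      hpow_ne p hp i (Finset.ne_of_mem_erase hi)
  have hp2ne0 : ∀ p ∈ Λ, p.2 ≠ 0 := by
    intro p hp h
    rw [hmemΛ] at hp
    rw [h, zero_pow (ha p.1).ne'] at hp
    exact zero_ne_one hp.2
  have hp2T : ∀ p ∈ Λ, p.2 ∈ T := fun p hp => hTsub p.2 p.1 ((hmemΛ p).mp hp).2
  have haj0 : ∀ j, ((a j : ℂ)) ≠ 0 := fun j => Nat.cast_ne_zero.mpr (ha j).ne'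
  -- the pieces
  set c : Fin (d + 1) → ℂ → ℂ := fun j t =>
    -t ^ (n + 1) / ((a j : ℂ) * ∏ i ∈ Finset.univ.erase j, (1 - t ^ a i)) with hcdef
  set F : ℂ → ℂ := fun z => z ^ n * (∏ j, (1 - z ^ a j))⁻¹ with hFdef
  set SB : ℂ → ℂ := fun z => ∑ k ∈ Finset.Icc 1 (d + 1), B k / (z - 1) ^ k with hSBdef
  set SΛ : ℂ → ℂ := fun z => ∑ p ∈ Λ, c p.1 p.2 * (z - p.2)⁻¹ with hSΛdef
  set g : ℂ → ℂ := fun z => F z - SB z - SΛ z with hgdef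
  have hB' : Tendsto (fun z => F z - SB z) (𝓝[≠] 1) (𝓝 L) := hB
  have hzero : ∀ t : ℂ, Tendsto (fun z : ℂ => z - t) (𝓝[≠] t) (𝓝 0) := by
    intro t
    have h4 : Tendsto (fun z : ℂ => z - t) (𝓝 t) (𝓝 (t - t)) :=
      (continuous_id.sub continuous_const).tendsto t
    rw [sub_self] at h4
    exact h4.mono_left nhdsWithin_le_nhds
  -- continuity of SB away from 1
  have hcontSB : ∀ t : ℂ, t ≠ 1 → ContinuousAt SB t := by
    intro t ht
    refine tendsto_finset_sum _ fun k hk => ?_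
    exact (continuousAt_const.div (((continuous_id.sub continuous_const).pow k).continuousAt)
      (pow_ne_zero _ (sub_ne_zero.mpr ht)))
  -- continuity of a partial Λ-sum away from its poles
  have hcontSΛ : ∀ (s : Finset ((_ : Fin (d + 1)) × ℂ)) (t : ℂ), (∀ p ∈ s, p.2 ≠ t) →
      ContinuousAt (fun z => ∑ p ∈ s, c p.1 p.2 * (z - p.2)⁻¹) t := by
    intro s t hs
    refine tendsto_finset_sum _ fun p hp => ?_
    exact continuousAt_const.mul (((continuous_id.sub continuous_const).continuousAt).inv₀
      (sub_ne_zero.mpr (fun h => hs p hp h.symm)))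
  -- differentiability away from T
  have hd : DifferentiableOn ℂ g ((T : Set ℂ)ᶜ) := by
    intro z hz
    have hzT : z ∉ T := hz
    have hz1 : z ≠ 1 := fun h => hzT (h ▸ h1T)
    refine DifferentiableAt.differentiableWithinAt ?_
    have hF' : DifferentiableAt ℂ F z := by
      refine (differentiableAt_pow n).mul (DifferentiableAt.inv ?_ ?_)
      · exact DifferentiableAt.fun_finsetProd fun i _ =>
          (differentiableAt_const _).sub (differentiableAt_pow _)
      · exact Finset.prod_ne_zero_iff.mpr fun i _ => hnotT z hzT i
    have hSB' : DifferentiableAt ℂ SB z := by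
      refine DifferentiableAt.fun_sum fun k _ => ?_
      exact (differentiableAt_const _).div
        ((differentiableAt_id.sub (differentiableAt_const _)).pow k)
        (pow_ne_zero _ (sub_ne_zero.mpr hz1))
    have hSL' : DifferentiableAt ℂ SΛ z := by
      refine DifferentiableAt.fun_sum fun p hp => ?_
      refine (differentiableAt_const _).mul (DifferentiableAt.inv
        (differentiableAt_id.sub (differentiableAt_const _)) ?_)
      exact sub_ne_zero.mpr (fun h => hzT (h ▸ hp2T p hp))
    exact (hF'.sub hSB').sub hSL'
  -- removable singularities
  have ho : ∀ t ∈ T, Tendsto (fun z => (z - t) * g z) (𝓝[≠] t) (𝓝 0) := by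
    intro t htT
    by_cases ht1 : t = 1
    · subst ht1
      have hA1 : Tendsto (fun z => (z - 1) * (F z - SB z)) (𝓝[≠] 1) (𝓝 (0 * L)) :=
        (hzero 1).mul hB'
      have hA2 : Tendsto (fun z => (z - 1) * SΛ z) (𝓝[≠] 1) (𝓝 (0 * SΛ 1)) :=
        (hzero 1).mul ((hcontSΛ Λ 1 fun p hp => ((hmemΛ p).mp hp).1).mono_left
          nhdsWithin_le_nhds)
      have htot := hA1.sub hA2
      rw [zero_mul, zero_mul, sub_zero] at htot
      exact htot.congr fun z => by rw [hgdef]; ring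
    · by_cases hj : ∃ j, t ^ a j = 1
      · obtain ⟨j, hj⟩ := hj
        have hp₀ : (⟨j, t⟩ : (_ : Fin (d + 1)) × ℂ) ∈ Λ := (hmemΛ _).mpr ⟨ht1, hj⟩
        have hsplit : ∀ z : ℂ, SΛ z =
            c j t * (z - t)⁻¹ + ∑ p ∈ Λ.erase ⟨j, t⟩, c p.1 p.2 * (z - p.2)⁻¹ := by
          intro z
          rw [hSΛdef]
          exact (Finset.add_sum_erase Λ _ hp₀).symm
        have hrest : ∀ p ∈ Λ.erase (⟨j, t⟩ : (_ : Fin (d + 1)) × ℂ), p.2 ≠ t := by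
          rintro ⟨i, w⟩ hp h
          have hpΛ := Finset.mem_of_mem_erase hp
          have hpne := Finset.ne_of_mem_erase hp
          dsimp at h
          subst h
          by_cases hpj : i = j
          · subst hpj; exact hpne rfl
          · exact ht1 (eq_one_of_pow_coprime (ha i) (hcop i j hpj)
              ((hmemΛ _).mp hpΛ).2 hj)
        have hres := residue_tendsto a ha n j t hj (hprodne ⟨j, t⟩ hp₀)
        have hSBlim : Tendsto (fun z => (z - t) * SB z) (𝓝[≠] t) (𝓝 (0 * SB t)) :=
          (hzero t).mul ((hcontSB t ht1).mono_left nhdsWithin_le_nhds)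
        have hrestlim : Tendsto
            (fun z => (z - t) * ∑ p ∈ Λ.erase ⟨j, t⟩, c p.1 p.2 * (z - p.2)⁻¹)
            (𝓝[≠] t) (𝓝 (0 * ∑ p ∈ Λ.erase ⟨j, t⟩, c p.1 p.2 * (t - p.2)⁻¹)) :=
          (hzero t).mul ((hcontSΛ _ t hrest).mono_left nhdsWithin_le_nhds)
        have hidlim : Tendsto (fun z => (z - t) * (c j t * (z - t)⁻¹)) (𝓝[≠] t)
            (𝓝 (c j t)) := by
          refine Tendsto.congr' ?_ (tendsto_const_nhds (x := c j t))
          filter_upwards [self_mem_nhdsWithin] with z (hz : z ≠ t)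
          field_simp [sub_ne_zero.mpr hz]
        have hres' : Tendsto (fun z : ℂ => (z - t) * F z) (𝓝[≠] t) (𝓝 (c j t)) := hres
        have htot := ((hres'.sub hSBlim).sub hidlim).sub hrestlim
        simp only [zero_mul, sub_zero, sub_self] at htot
        refine htot.congr fun z => ?_
        rw [hgdef]
        dsimp only
        rw [hsplit z]
        ring
      · push_neg at hj
        have hF' : ContinuousAt F t := by
          refine (continuousAt_pow t n).mul (ContinuousAt.inv₀
            ((continuous_finset_prod _ fun i _ =>
              continuous_const.sub (continuous_pow _)).continuousAt) ?_)
          refine Finset.prod_ne_zero_iff.mpr fun i _ h => hj i ?_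
          linear_combination -h
        have hcont : ContinuousAt g t :=
          (hF'.sub (hcontSB t ht1)).sub (hcontSΛ Λ t fun p hp h =>
            hj p.1 (by rw [← h]; exact ((hmemΛ p).mp hp).2))
        have htot := (hzero t).mul (hcont.mono_left nhdsWithin_le_nhds)
        rw [zero_mul] at htot
        exact htot
  -- glue
  obtain ⟨G, hG, hGg⟩ := remove_sings T g hd ho
  have hgcob : Tendsto g (Bornology.cobounded ℂ) (𝓝 0) := by
    have hFcob : Tendsto F (Bornology.cobounded ℂ) (𝓝 0) := f_tendsto_cobounded a ha n hn'
    have hSBcob : Tendsto SB (Bornology.cobounded ℂ) (𝓝 0) := by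
      have hz : (0 : ℂ) = ∑ k ∈ Finset.Icc 1 (d + 1), (0 : ℂ) := by simp
      rw [hSBdef, hz]
      refine tendsto_finset_sum _ fun k hk => ?_
      have hk1 : k ≠ 0 := by rw [Finset.mem_Icc] at hk; omega
      have h1 : Tendsto (fun z : ℂ => ((z - 1)⁻¹) ^ k) (Bornology.cobounded ℂ) (𝓝 0) := by
        have := (tendsto_inv_sub_cobounded 1).pow k
        rwa [zero_pow hk1] at this
      have h2 := h1.const_mul (B k)
      rw [mul_zero] at h2
      refine h2.congr fun z => by rw [inv_pow, ← div_eq_mul_inv]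
    have hSLcob : Tendsto SΛ (Bornology.cobounded ℂ) (𝓝 0) := by
      have hz : (0 : ℂ) = ∑ p ∈ Λ, (0 : ℂ) := by simp
      rw [hSΛdef, hz]
      refine tendsto_finset_sum _ fun p hp => ?_
      have h2 := (tendsto_inv_sub_cobounded p.2).const_mul (c p.1 p.2)
      rwa [mul_zero] at h2
    have htot := (hFcob.sub hSBcob).sub hSLcob
    rw [sub_zero, sub_zero] at htot
    exact htot
  have hGcob : Tendsto G (Bornology.cobounded ℂ) (𝓝 0) := by
    refine hgcob.congr' ?_
    have hTm : ((T : Set ℂ))ᶜ ∈ Bornology.cobounded ℂ := by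
      rw [← Bornology.isCobounded_def, ← Bornology.isBounded_compl_iff, compl_compl]
      exact T.finite_toSet.isBounded
    filter_upwards [hTm] with z hz
    exact (hGg z hz).symm
  have hgz : F 0 - SB 0 - SΛ 0 = 0 := by
    have : g 0 = 0 := by rw [← hGg 0 h0T]; exact liouville_zero hG hGcob 0
    exact this
  -- evaluation at 0
  have hF0 : F 0 = 0 := by rw [hFdef]; simp [zero_pow hn.ne']
  have hSB0 : SB 0 = ∑ k ∈ Finset.Icc 1 (d + 1), (-1 : ℂ) ^ k * B k := by
    rw [hSBdef]
    refine Finset.sum_congr rfl fun k _ => ?_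
    have h2 : ((-1 : ℂ)) ^ k * ((-1 : ℂ)) ^ k = 1 := by
      rw [← pow_add, ← two_mul, pow_mul]; norm_num
    rw [zero_sub, div_eq_iff (pow_ne_zero k (neg_ne_zero.mpr (one_ne_zero (α := ℂ))))]
    linear_combination (-(B k)) * h2
  have hSL0 : SΛ 0 = ∑ j, fourierDedekindOmit (n : ℤ) a j := by
    simp only [hSΛdef, hΛdef]
    rw [Finset.sum_sigma]
    refine Finset.sum_congr rfl fun j _ => ?_
    rw [fourierDedekindOmit, Finset.mul_sum]
    refine Finset.sum_congr rfl fun t ht => ?_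
    have htΛ : (⟨j, t⟩ : (_ : Fin (d + 1)) × ℂ) ∈ Λ :=
      Finset.mem_sigma.mpr ⟨Finset.mem_univ j, ht⟩
    have ht0 : t ≠ 0 := hp2ne0 _ htΛ
    have hP := hprodne _ htΛ
    rw [zpow_natCast, hcdef]
    dsimp only
    rw [zero_sub, pow_succ]
    field_simp
  rw [hF0, hSB0] at hgz
  rw [← hSL0]
  linear_combination -hgz
end
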